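/- arXiv:2511.14944 — 4 statements merged into one kernel-verified Lean document; each statement's English description precedes it below -/
import Mathlib

section
/- Let G be a topological group and let φ: L → K be a proximally irreducible extension of affine G-flows. Then φ maps cl(ext(L)) onto cl(ext(K)), and the restriction of φ to cl(ext(L)) is a G-irreducible extension of G-flows from cl(ext(L)) onto cl(ext(K)). -/
universe u v w x

/-- An affine `G`-flow: a nonempty compact convex subset of a Hausdorff locally convex
real topological vector space, equipped with a continuous action of `G` by affine
homeomorphisms.  The action is recorded as a function `smul : G → E → E` on the ambient
space whose behaviour is only constrained on `carrier`. -/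
structure AffineFlow (G : Type u) [Group G] [TopologicalSpace G] [IsTopologicalGroup G] where
  /-- the ambient locally convex topological real vector space -/
  E : Type v
  [instAddCommGroup : AddCommGroup E]
  [instModule : Module ℝ E]
  [instTopologicalSpace : TopologicalSpace E]
  [instT2Space : T2Space E]
  [instTopologicalAddGroup : IsTopologicalAddGroup E]
  [instContinuousSMul : ContinuousSMul ℝ E]
  [instLocallyConvexSpace : LocallyConvexSpace ℝ E]
  /-- the compact convex set itself -/
  carrier : Set E
  nonempty' : carrier.Nonempty
  isCompact' : IsCompact carrier
  convex' : Convex ℝ carrier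
  /-- the action of `G` -/
  smul : G → E → E
  smul_mem' : ∀ g : G, ∀ x ∈ carrier, smul g x ∈ carrier
  one_smul' : ∀ x ∈ carrier, smul 1 x = x
  mul_smul' : ∀ g h : G, ∀ x ∈ carrier, smul (g * h) x = smul g (smul h x)
  continuousOn_smul' : ContinuousOn (fun p : G × E => smul p.1 p.2) (Set.univ ×ˢ carrier)
  smul_affine' : ∀ g : G, ∀ x ∈ carrier, ∀ y ∈ carrier, ∀ t : ℝ, 0 ≤ t → t ≤ 1 →
    smul g (t • x + (1 - t) • y) = t • smul g x + (1 - t) • smul g y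

attribute [instance] AffineFlow.instAddCommGroup AffineFlow.instModule
  AffineFlow.instTopologicalSpace AffineFlow.instT2Space AffineFlow.instTopologicalAddGroup
  AffineFlow.instContinuousSMul AffineFlow.instLocallyConvexSpace

/-- An affine `G`-map between affine `G`-flows: a continuous affine `G`-equivariant map
(recorded on the ambient spaces, with all conditions on the carriers). -/
def IsAffineGMap {G : Type u} [Group G] [TopologicalSpace G] [IsTopologicalGroup G]
    (K : AffineFlow.{u, v} G) (L : AffineFlow.{u, w} G) (f : K.E → L.E) : Prop :=
  Set.MapsTo f K.carrier L.carrier ∧ ContinuousOn f K.carrier ∧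
    (∀ g : G, ∀ x ∈ K.carrier, f (K.smul g x) = L.smul g (f x)) ∧
    ∀ x ∈ K.carrier, ∀ y ∈ K.carrier, ∀ t : ℝ, 0 ≤ t → t ≤ 1 →
      f (t • x + (1 - t) • y) = t • f x + (1 - t) • f y

/-- An affine extension: a surjective affine `G`-map. -/
def IsAffineExtension {G : Type u} [Group G] [TopologicalSpace G] [IsTopologicalGroup G]
    (K : AffineFlow.{u, v} G) (L : AffineFlow.{u, w} G) (f : K.E → L.E) : Prop :=
  IsAffineGMap K L f ∧ f '' K.carrier = L.carrier

/-- An affine subflow: a nonempty closed convex `G`-invariant subset. -/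
def AffineFlow.IsAffineSubflow {G : Type u} [Group G] [TopologicalSpace G] [IsTopologicalGroup G]
    (K : AffineFlow.{u, v} G) (C : Set K.E) : Prop :=
  C.Nonempty ∧ C ⊆ K.carrier ∧ IsClosed C ∧ Convex ℝ C ∧ ∀ g : G, ∀ x ∈ C, K.smul g x ∈ C

/-- An affine extension `f : K → L` is affine `G`-irreducible if no proper affine subflow
of `K` maps onto `L`. -/
def IsAffineIrreducibleExt {G : Type u} [Group G] [TopologicalSpace G] [IsTopologicalGroup G]
    (K : AffineFlow.{u, v} G) (L : AffineFlow.{u, w} G) (f : K.E → L.E) : Prop :=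
  IsAffineExtension K L f ∧
    ∀ C : Set K.E, K.IsAffineSubflow C → C ≠ K.carrier → f '' C ≠ L.carrier

/-- An affine extension `f : K → L` is proximally irreducible if the only affine subflow
`C` of `K` meeting `conv (cl (ext K) ∩ f ⁻¹' {y})` for every `y ∈ cl (ext L)` is `K` itself. -/
def IsProximallyIrreducibleExt {G : Type u} [Group G] [TopologicalSpace G] [IsTopologicalGroup G]
    (K : AffineFlow.{u, v} G) (L : AffineFlow.{u, w} G) (f : K.E → L.E) : Prop :=
  IsAffineExtension K L f ∧
    ∀ C : Set K.E, K.IsAffineSubflow C →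
      (∀ y ∈ closure (L.carrier.extremePoints ℝ),
        (C ∩ convexHull ℝ (closure (K.carrier.extremePoints ℝ) ∩ f ⁻¹' {y})).Nonempty) →
      C = K.carrier

/-- An affine `G`-flow `K` is affine `G`-projective if for all affine `G`-flows `L`, `P`,
every affine `G`-map `φ : K → L` and every affine extension `π : P → L`, there is an
affine `G`-map `ψ : K → P` with `π ∘ ψ = φ` (on the carrier of `K`). -/
def IsAffineGProjective {G : Type u} [Group G] [TopologicalSpace G] [IsTopologicalGroup G]
    (K : AffineFlow.{u, v} G) : Prop :=
  ∀ (L : AffineFlow.{u, w} G) (P : AffineFlow.{u, x} G) (φ : K.E → L.E) (π : P.E → L.E),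
    IsAffineGMap K L φ → IsAffineExtension P L π →
    ∃ ψ : K.E → P.E, IsAffineGMap K P ψ ∧ ∀ y ∈ K.carrier, π (ψ y) = φ y


open Set Filter Topology

section Helpers

variable {E : Type*} [AddCommGroup E] [Module ℝ E] [TopologicalSpace E] [T2Space E]
  [IsTopologicalAddGroup E] [ContinuousSMul ℝ E] [LocallyConvexSpace ℝ E]

lemma isCompact_convexJoin {s t : Set E} (hs : IsCompact s) (ht : IsCompact t) :
    IsCompact (convexJoin ℝ s t) := by
  have h : convexJoin ℝ s t =
      (fun p : ℝ × E × E => (1 - p.1) • p.2.1 + p.1 • p.2.2) '' (Icc (0:ℝ) 1 ×ˢ s ×ˢ t) := by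
    ext z
    simp only [mem_convexJoin, Set.mem_image, Set.mem_prod, Prod.exists]
    constructor
    · rintro ⟨a, ha, b, hb, hz⟩
      rw [segment_eq_image ℝ a b] at hz
      obtain ⟨θ, hθ, rfl⟩ := hz
      exact ⟨θ, a, b, ⟨hθ, ha, hb⟩, rfl⟩
    · rintro ⟨θ, a, b, ⟨hθ, ha, hb⟩, rfl⟩
      refine ⟨a, ha, b, hb, ?_⟩
      rw [segment_eq_image ℝ a b]
      exact ⟨θ, hθ, rfl⟩
  rw [h]
  exact (isCompact_Icc.prod (hs.prod ht)).image (by fun_prop)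

lemma isCompact_convexHull_biUnion {ι : Type*} (F : Finset ι) (K : ι → Set E)
    (hc : ∀ i ∈ F, IsCompact (K i)) (hv : ∀ i ∈ F, Convex ℝ (K i)) :
    IsCompact (convexHull ℝ (⋃ i ∈ F, K i)) := by
  classical
  induction F using Finset.induction_on with
  | empty => simp
  | @insert a F hna ih =>
    rw [Finset.set_biUnion_insert]
    have hKa : IsCompact (K a) := hc a (Finset.mem_insert_self _ _)
    have hKav : Convex ℝ (K a) := hv a (Finset.mem_insert_self _ _)
    have hT : IsCompact (convexHull ℝ (⋃ i ∈ F, K i)) :=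
      ih (fun i hi => hc i (Finset.mem_insert_of_mem hi))
        (fun i hi => hv i (Finset.mem_insert_of_mem hi))
    rcases (K a).eq_empty_or_nonempty with hKae | hKan
    · rw [hKae, Set.empty_union]; exact hT
    rcases (⋃ i ∈ F, K i).eq_empty_or_nonempty with hTe | hTn
    · rw [hTe, Set.union_empty, hKav.convexHull_eq]; exact hKa
    rw [convexHull_union hKan hTn, hKav.convexHull_eq]
    exact isCompact_convexJoin hKa hT

lemma extremePoint_mem_of_biUnion {ι : Type*} {s : Set E} {x : E}
    (hx : x ∈ s.extremePoints ℝ) (hs : Convex ℝ s) :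
    ∀ F : Finset ι, ∀ K : ι → Set E, (∀ i ∈ F, Convex ℝ (K i)) → (∀ i ∈ F, K i ⊆ s) →
      x ∈ convexHull ℝ (⋃ i ∈ F, K i) → ∃ i ∈ F, x ∈ K i := by
  classical
  intro F
  induction F using Finset.induction_on with
  | empty => intro K _ _ hmem; simp at hmem
  | @insert a F hna ih =>
    intro K hv hsub hmem
    rw [Finset.set_biUnion_insert] at hmem
    have hKa : Convex ℝ (K a) := hv a (Finset.mem_insert_self _ _)
    have hKas : K a ⊆ s := hsub a (Finset.mem_insert_self _ _)
    have hv' : ∀ i ∈ F, Convex ℝ (K i) := fun i hi => hv i (Finset.mem_insert_of_mem hi)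
    have hsub' : ∀ i ∈ F, K i ⊆ s := fun i hi => hsub i (Finset.mem_insert_of_mem hi)
    rcases (K a).eq_empty_or_nonempty with hKae | hKan
    · rw [hKae, Set.empty_union] at hmem
      obtain ⟨i, hi, hxi⟩ := ih K hv' hsub' hmem
      exact ⟨i, Finset.mem_insert_of_mem hi, hxi⟩
    rcases (⋃ i ∈ F, K i).eq_empty_or_nonempty with hTe | hTn
    · rw [hTe, Set.union_empty, hKa.convexHull_eq] at hmem
      exact ⟨a, Finset.mem_insert_self _ _, hmem⟩
    rw [convexHull_union hKan hTn, hKa.convexHull_eq, mem_convexJoin] at hmem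
    obtain ⟨p, hp, q, hq, hxseg⟩ := hmem
    have hTs : convexHull ℝ (⋃ i ∈ F, K i) ⊆ s :=
      convexHull_min (Set.iUnion₂_subset hsub') hs
    rw [← insert_endpoints_openSegment, Set.mem_insert_iff, Set.mem_insert_iff] at hxseg
    rcases hxseg with rfl | rfl | hxo
    · exact ⟨a, Finset.mem_insert_self _ _, hp⟩
    · obtain ⟨i, hi, hxi⟩ := ih K hv' hsub' hq
      exact ⟨i, Finset.mem_insert_of_mem hi, hxi⟩
    · obtain ⟨hpx, hqx⟩ := (mem_extremePoints.1 hx).2 _ (hKas hp) _ (hTs hq) hxo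
      exact ⟨a, Finset.mem_insert_self _ _, hpx ▸ hp⟩

/-- **Milman's theorem**. -/
lemma milman_aux {S : Set E} (hS : IsCompact S)
    (hsc : IsCompact (closure (convexHull ℝ S))) :
    (closure (convexHull ℝ S)).extremePoints ℝ ⊆ closure S := by
  set s := closure (convexHull ℝ S) with hs_def
  have hs_conv : Convex ℝ s := (convex_convexHull ℝ S).closure
  intro x hx
  rw [mem_closure_iff_nhds]
  intro U hU
  -- a neighborhood `W` of `0` with `x + (a + b + c) ∈ U` for `a b c ∈ W`
  have hU0 : (fun y => x + y) ⁻¹' U ∈ 𝓝 (0 : E) :=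
    (continuous_add_left x).continuousAt.preimage_mem_nhds (by simpa using hU)
  obtain ⟨W₁, hW₁, hW₁add⟩ := exists_nhds_zero_half hU0
  obtain ⟨W₂, hW₂, hW₂add⟩ := exists_nhds_zero_half hW₁
  set W := W₁ ∩ W₂ with hW_def
  have hWn : W ∈ 𝓝 (0 : E) := inter_mem hW₁ hW₂
  have key : ∀ a ∈ W, ∀ b ∈ W, ∀ c ∈ W, x + (a + b + c) ∈ U := by
    intro a ha b hb c hc
    exact hW₁add _ (hW₂add a ha.2 b hb.2) c hc.1
  -- a symmetric convex neighborhood `V ⊆ W` of `0`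
  obtain ⟨V₀, ⟨hV₀n, hV₀c⟩, hV₀W⟩ :=
    (LocallyConvexSpace.convex_basis (𝕜 := ℝ) (0 : E)).mem_iff.1 hWn
  set V := V₀ ∩ -V₀ with hV_def
  have hVn : V ∈ 𝓝 (0 : E) := inter_mem hV₀n
    (continuous_neg.continuousAt.preimage_mem_nhds (by simpa using hV₀n))
  have hVc : Convex ℝ V := hV₀c.inter hV₀c.neg
  have hVsym : ∀ v ∈ V, -v ∈ V := by
    rintro v ⟨hv1, hv2⟩
    exact ⟨hv2, by simpa using hv1⟩
  have hVW : V ⊆ W := fun v hv => hV₀W hv.1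
  have h0V : (0 : E) ∈ V := mem_of_mem_nhds hVn
  -- cover S by finitely many translates
  have hcov : S ⊆ ⋃ t ∈ S, (fun z => t + z) '' interior V := by
    intro u hu
    refine Set.mem_biUnion hu ⟨0, ?_, by simp⟩
    exact mem_interior_iff_mem_nhds.2 hVn
  obtain ⟨b, hbS, hbfin, hbcov⟩ := hS.elim_finite_subcover_image
    (fun t _ => (Homeomorph.addLeft t).isOpenMap _ isOpen_interior) hcov
  set K : E → Set E := fun t => closure (convexHull ℝ (S ∩ (fun z => t + z) '' V)) with hK_def
  have hKsub : ∀ t, K t ⊆ s :=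
    fun t => closure_mono (convexHull_mono inter_subset_left)
  have hKcomp : ∀ t, IsCompact (K t) :=
    fun t => hsc.of_isClosed_subset isClosed_closure (hKsub t)
  have hKconv : ∀ t, Convex ℝ (K t) := fun t => (convex_convexHull ℝ _).closure
  set F := hbfin.toFinset with hF_def
  -- s is contained in the convex hull of the union of the K t
  have hhull : s ⊆ convexHull ℝ (⋃ t ∈ F, K t) := by
    have hcompH : IsCompact (convexHull ℝ (⋃ t ∈ F, K t)) :=
      isCompact_convexHull_biUnion F K (fun i _ => hKcomp i) (fun i _ => hKconv i)
    have hSsub : S ⊆ ⋃ t ∈ F, K t := by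
      intro u hu
      obtain ⟨t, htb, hut⟩ := Set.mem_iUnion₂.1 (hbcov hu)
      refine Set.mem_biUnion (hbfin.mem_toFinset.2 htb) ?_
      refine subset_closure (subset_convexHull ℝ _ ⟨hu, ?_⟩)
      exact Set.image_mono interior_subset hut
    exact closure_minimal
      (convexHull_min (hSsub.trans (subset_convexHull ℝ _)) (convex_convexHull ℝ _))
      hcompH.isClosed
  obtain ⟨t, htF, hxK⟩ := extremePoint_mem_of_biUnion hx hs_conv F K
    (fun i _ => hKconv i) (fun i _ => hKsub i) (hhull hx.1)
  have htS : t ∈ S := hbS (hbfin.mem_toFinset.1 htF)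
  -- x is in the closure of t + V
  have hxcl : x ∈ closure ((fun z => t + z) '' V) :=
    closure_mono (convexHull_min inter_subset_right (hVc.translate t)) hxK
  have hnbhd : (fun y => x + y) '' W ∈ 𝓝 x := by
    simpa using (Homeomorph.addLeft x).isOpenMap.image_mem_nhds hWn
  obtain ⟨z, hz1, hz2⟩ := mem_closure_iff_nhds.1 hxcl _ hnbhd
  obtain ⟨w, hw, hzw⟩ := hz1
  obtain ⟨v, hv, hzv⟩ := hz2
  -- then t itself lies in U ∩ S
  refine ⟨t, ?_, htS⟩
  have ht_eq : t = x + (0 + -v + w) := by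
    have h1 : x + w = z := hzw
    have h2 : t + v = z := hzv
    have h4 : t = x + w - v := eq_sub_of_add_eq (h2.trans h1.symm)
    rw [h4]; abel
  rw [ht_eq]
  exact key 0 (hVW h0V) (-v) (hVW (hVsym v hv)) w hw

/-- image of a convex hull under a map affine on a convex superset -/
lemma image_convexHull_subset {F : Type*} [AddCommGroup F] [Module ℝ F]
    {s : Set E} (hs : Convex ℝ s) {f : E → F}
    (haff : ∀ x ∈ s, ∀ y ∈ s, ∀ t : ℝ, 0 ≤ t → t ≤ 1 →
      f (t • x + (1 - t) • y) = t • f x + (1 - t) • f y)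
    {A : Set E} (hA : A ⊆ s) : f '' convexHull ℝ A ⊆ convexHull ℝ (f '' A) := by
  rintro _ ⟨z, hz, rfl⟩
  set T : Set E := {z | z ∈ convexHull ℝ A ∧ f z ∈ convexHull ℝ (f '' A)} with hT_def
  have hTconv : Convex ℝ T := by
    rintro p ⟨hp1, hp2⟩ q ⟨hq1, hq2⟩ a b ha hb hab
    have hb' : b = 1 - a := by linarith
    refine ⟨(convex_convexHull ℝ A) hp1 hq1 ha hb hab, ?_⟩
    have hps : p ∈ s := convexHull_min hA hs hp1
    have hqs : q ∈ s := convexHull_min hA hs hq1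
    rw [hb', haff p hps q hqs a ha (by linarith)]
    exact (convex_convexHull ℝ (f '' A)) hp2 hq2 ha (by linarith) (by ring)
  have hAT : A ⊆ T := fun z hz =>
    ⟨subset_convexHull ℝ A hz, subset_convexHull ℝ _ (Set.mem_image_of_mem f hz)⟩
  exact (convexHull_min hAT hTconv hz).2

end Helpers

section FlowLemmas

variable {G : Type u} [Group G] [TopologicalSpace G] [IsTopologicalGroup G]

lemma AffineFlow.smul_continuousOn (L : AffineFlow.{u, v} G) (g : G) :
    ContinuousOn (fun x => L.smul g x) L.carrier :=
  L.continuousOn_smul'.comp ((continuous_const.prodMk continuous_id).continuousOn)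
    (fun x hx => ⟨Set.mem_univ g, hx⟩)

lemma AffineFlow.smul_extremePoint (L : AffineFlow.{u, v} G) (g : G) {x : L.E}
    (hx : x ∈ L.carrier.extremePoints ℝ) : L.smul g x ∈ L.carrier.extremePoints ℝ := by
  refine mem_extremePoints.2 ⟨L.smul_mem' g x hx.1, ?_⟩
  intro x₁ hx₁ x₂ hx₂ hseg
  have hid : ∀ z ∈ L.carrier, L.smul g⁻¹ (L.smul g z) = z := fun z hz => by
    rw [← L.mul_smul' g⁻¹ g z hz, inv_mul_cancel, L.one_smul' z hz]
  have hid' : ∀ z ∈ L.carrier, L.smul g (L.smul g⁻¹ z) = z := fun z hz => by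
    rw [← L.mul_smul' g g⁻¹ z hz, mul_inv_cancel, L.one_smul' z hz]
  rw [openSegment_eq_image] at hseg
  obtain ⟨θ, hθ, hθeq⟩ := hseg
  have hθeq' : (1 - θ) • x₁ + θ • x₂ = L.smul g x := hθeq
  have haff := L.smul_affine' g⁻¹ x₁ hx₁ x₂ hx₂ (1 - θ) (by linarith [hθ.2]) (by linarith [hθ.1])
  rw [sub_sub_cancel] at haff
  have hx' : x ∈ openSegment ℝ (L.smul g⁻¹ x₁) (L.smul g⁻¹ x₂) := by
    rw [openSegment_eq_image]
    refine ⟨θ, hθ, ?_⟩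
    show (1 - θ) • L.smul g⁻¹ x₁ + θ • L.smul g⁻¹ x₂ = x
    rw [← haff, hθeq', hid x hx.1]
  obtain ⟨h1, h2⟩ := (mem_extremePoints.1 hx).2 _ (L.smul_mem' g⁻¹ x₁ hx₁) _ (L.smul_mem' g⁻¹ x₂ hx₂) hx'
  constructor
  · rw [← hid' x₁ hx₁, h1]
  · rw [← hid' x₂ hx₂, h2]

lemma AffineFlow.smul_mem_closure (L : AffineFlow.{u, v} G) (g : G) {A : Set L.E}
    (hA : A ⊆ L.carrier) (hinv : ∀ a ∈ A, L.smul g a ∈ A) :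
    ∀ z ∈ closure A, L.smul g z ∈ closure A := by
  intro z hz
  have hclA : closure A ⊆ L.carrier := closure_minimal hA L.isCompact'.isClosed
  have hc : ContinuousOn (fun x => L.smul g x) (closure A) :=
    (L.smul_continuousOn g).mono hclA
  have h1 : L.smul g z ∈ closure ((fun x => L.smul g x) '' A) :=
    hc.image_closure ⟨z, hz, rfl⟩
  exact closure_mono (Set.image_subset_iff.2 hinv) h1

end FlowLemmas

/-- **Statement 11.** A proximally irreducible extension restricts to a `G`-irreducible
extension between the closures of the sets of extreme points. -/
theorem statement11 {G : Type u} [Group G] [TopologicalSpace G] [IsTopologicalGroup G]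
    (L : AffineFlow.{u, v} G) (K : AffineFlow.{u, w} G) (f : L.E → K.E)
    (hf : IsProximallyIrreducibleExt L K f) :
    f '' closure (L.carrier.extremePoints ℝ) = closure (K.carrier.extremePoints ℝ) ∧
      ∀ C : Set L.E, C.Nonempty → IsClosed C → C ⊆ closure (L.carrier.extremePoints ℝ) →
        (∀ g : G, ∀ x ∈ C, L.smul g x ∈ C) →
        C ≠ closure (L.carrier.extremePoints ℝ) →
        f '' C ≠ closure (K.carrier.extremePoints ℝ) := by
  classical
  obtain ⟨⟨⟨hfm, hfc, hfe, hfa⟩, hfs⟩, hPI⟩ := hf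
  set X := closure (L.carrier.extremePoints ℝ) with hX_def
  set Y := closure (K.carrier.extremePoints ℝ) with hY_def
  have hLcl : IsClosed L.carrier := L.isCompact'.isClosed
  have hKcl : IsClosed K.carrier := K.isCompact'.isClosed
  have hXsub : X ⊆ L.carrier := closure_minimal extremePoints_subset hLcl
  have hYsub : Y ⊆ K.carrier := closure_minimal extremePoints_subset hKcl
  have hXcl : IsClosed X := isClosed_closure
  have hYcl : IsClosed Y := isClosed_closure
  have hXcomp : IsCompact X := L.isCompact'.of_isClosed_subset hXcl hXsub
  have hYne : Y.Nonempty := by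
    obtain ⟨w, hw⟩ := K.isCompact'.extremePoints_nonempty K.nonempty'
    exact ⟨w, subset_closure hw⟩
  have hXinv : ∀ g : G, ∀ x ∈ X, L.smul g x ∈ X := fun g =>
    L.smul_mem_closure g extremePoints_subset (fun a ha => L.smul_extremePoint g ha)
  have hYinv : ∀ g : G, ∀ y ∈ Y, K.smul g y ∈ Y := fun g =>
    K.smul_mem_closure g extremePoints_subset (fun a ha => K.smul_extremePoint g ha)
  -- every extreme point of K.carrier is the image of an extreme point of L.carrier
  have hExtKsub : ∀ w ∈ K.carrier.extremePoints ℝ,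
      ∃ x ∈ L.carrier.extremePoints ℝ, f x = w := by
    intro w hw
    set Fb := L.carrier ∩ f ⁻¹' {w} with hFb
    have hFbcl : IsClosed Fb := hfc.preimage_isClosed_of_isClosed hLcl isClosed_singleton
    have hFbne : Fb.Nonempty := by
      have hwc : w ∈ K.carrier := hw.1
      rw [← hfs] at hwc
      obtain ⟨x, hx, hfx⟩ := hwc
      exact ⟨x, hx, by simp [hfx]⟩
    have hFbcomp : IsCompact Fb := L.isCompact'.of_isClosed_subset hFbcl Set.inter_subset_left
    obtain ⟨x, hxFb⟩ := hFbcomp.extremePoints_nonempty hFbne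
    have hxc : x ∈ L.carrier := hxFb.1.1
    have hfx : f x = w := hxFb.1.2
    refine ⟨x, ⟨hxc, ?_⟩, hfx⟩
    intro x₁ hx₁ x₂ hx₂ hseg
    rw [openSegment_eq_image] at hseg
    obtain ⟨θ, hθ, hθeq⟩ := hseg
    have hθeq' : (1 - θ) • x₁ + θ • x₂ = x := hθeq
    have haff := hfa x₁ hx₁ x₂ hx₂ (1 - θ) (by linarith [hθ.2]) (by linarith [hθ.1])
    rw [sub_sub_cancel] at haff
    have hwseg : w ∈ openSegment ℝ (f x₁) (f x₂) := by
      rw [openSegment_eq_image]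
      refine ⟨θ, hθ, ?_⟩
      show (1 - θ) • f x₁ + θ • f x₂ = w
      rw [← haff, hθeq', hfx]
    obtain ⟨h1, h2⟩ := (mem_extremePoints.1 hw).2 _ (hfm hx₁) _ (hfm hx₂) hwseg
    have hx₁Fb : x₁ ∈ Fb := ⟨hx₁, by simp [h1]⟩
    have hx₂Fb : x₂ ∈ Fb := ⟨hx₂, by simp [h2]⟩
    have hxseg : x ∈ openSegment ℝ x₁ x₂ := by
      rw [openSegment_eq_image]; exact ⟨θ, hθ, hθeq⟩
    exact hxFb.2 hx₁Fb hx₂Fb hxseg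
  have himgX : IsCompact (f '' X) := hXcomp.image_of_continuousOn (hfc.mono hXsub)
  have hYfX : Y ⊆ f '' X := by
    refine closure_minimal (fun w hw => ?_) himgX.isClosed
    obtain ⟨x, hx, hfx⟩ := hExtKsub w hw
    exact ⟨x, subset_closure hx, hfx⟩
  -- the subflow generated by X ∩ f⁻¹(Y)
  set S0 := X ∩ f ⁻¹' Y with hS0_def
  have hS0sub : S0 ⊆ L.carrier := Set.inter_subset_left.trans hXsub
  have hS0cl : IsClosed S0 := by
    have h : S0 = X ∩ (L.carrier ∩ f ⁻¹' Y) := by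
      ext z
      constructor
      · rintro ⟨h1, h2⟩; exact ⟨h1, hXsub h1, h2⟩
      · rintro ⟨h1, _, h2⟩; exact ⟨h1, h2⟩
    rw [h]
    exact hXcl.inter (hfc.preimage_isClosed_of_isClosed hLcl hYcl)
  have hS0ne : S0.Nonempty := by
    obtain ⟨w, hw⟩ := hYne
    obtain ⟨x, hxX, hfx⟩ := hYfX hw
    exact ⟨x, hxX, by rw [Set.mem_preimage, hfx]; exact hw⟩
  have hS0inv : ∀ g : G, ∀ x ∈ S0, L.smul g x ∈ S0 := by
    rintro g x ⟨hxX, hxY⟩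
    refine ⟨hXinv g x hxX, ?_⟩
    rw [Set.mem_preimage, hfe g x (hXsub hxX)]
    exact hYinv g _ hxY
  set C0 := closure (convexHull ℝ S0) with hC0_def
  have hC0sub : C0 ⊆ L.carrier := closure_minimal (convexHull_min hS0sub L.convex') hLcl
  have hC0inv : ∀ g : G, ∀ x ∈ C0, L.smul g x ∈ C0 := by
    intro g
    have hhull : ∀ a ∈ convexHull ℝ S0, L.smul g a ∈ convexHull ℝ S0 := by
      intro a ha
      have h1 := image_convexHull_subset L.convex' (L.smul_affine' g) hS0sub
        (Set.mem_image_of_mem _ ha)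
      exact convexHull_mono (Set.image_subset_iff.2 (hS0inv g)) h1
    exact L.smul_mem_closure g (convexHull_min hS0sub L.convex') hhull
  have hC0carrier : C0 = L.carrier := by
    refine hPI C0 ⟨hS0ne.mono ((subset_convexHull ℝ S0).trans subset_closure),
      hC0sub, isClosed_closure, (convex_convexHull ℝ S0).closure, hC0inv⟩ ?_
    intro y hy
    obtain ⟨x, hxX, hfx⟩ := hYfX hy
    have hxS0 : x ∈ S0 := ⟨hxX, by rw [Set.mem_preimage, hfx]; exact hy⟩
    refine ⟨x, subset_closure (subset_convexHull ℝ S0 hxS0), subset_convexHull ℝ _ ?_⟩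
    exact ⟨hxX, by simp [hfx]⟩
  have hS0comp : IsCompact S0 := L.isCompact'.of_isClosed_subset hS0cl hS0sub
  have hmil : L.carrier.extremePoints ℝ ⊆ S0 := by
    have h1 := milman_aux hS0comp (by rw [← hC0_def, hC0carrier]; exact L.isCompact')
    rw [← hC0_def, hC0carrier, hS0cl.closure_eq] at h1
    exact h1
  have hXS0 : X ⊆ S0 := by
    rw [hX_def]
    exact closure_minimal hmil hS0cl
  have hfXY : f '' X ⊆ Y := by
    rintro _ ⟨x, hx, rfl⟩
    exact (hXS0 hx).2
  refine ⟨Set.Subset.antisymm hfXY hYfX, ?_⟩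
  intro C hCne hCcl hCX hCinv hCneX hfC
  have hCsub : C ⊆ L.carrier := hCX.trans hXsub
  set D := closure (convexHull ℝ C) with hD_def
  have hDsub : D ⊆ L.carrier := closure_minimal (convexHull_min hCsub L.convex') hLcl
  have hDinv : ∀ g : G, ∀ x ∈ D, L.smul g x ∈ D := by
    intro g
    have hhull : ∀ a ∈ convexHull ℝ C, L.smul g a ∈ convexHull ℝ C := by
      intro a ha
      have h1 := image_convexHull_subset L.convex' (L.smul_affine' g) hCsub
        (Set.mem_image_of_mem _ ha)
      exact convexHull_mono (Set.image_subset_iff.2 (hCinv g)) h1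
    exact L.smul_mem_closure g (convexHull_min hCsub L.convex') hhull
  have hDcarrier : D = L.carrier := by
    refine hPI D ⟨hCne.mono ((subset_convexHull ℝ C).trans subset_closure),
      hDsub, isClosed_closure, (convex_convexHull ℝ C).closure, hDinv⟩ ?_
    intro y hy
    have hyC : y ∈ f '' C := hfC ▸ hy
    obtain ⟨x, hxC, hfx⟩ := hyC
    refine ⟨x, subset_closure (subset_convexHull ℝ C hxC), subset_convexHull ℝ _ ?_⟩
    exact ⟨hCX hxC, by simp [hfx]⟩
  have hCcomp : IsCompact C := L.isCompact'.of_isClosed_subset hCcl hCsub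
  have hmil2 : L.carrier.extremePoints ℝ ⊆ C := by
    have h1 := milman_aux hCcomp (by rw [← hD_def, hDcarrier]; exact L.isCompact')
    rw [← hD_def, hDcarrier, hCcl.closure_eq] at h1
    exact h1
  have hXC : X ⊆ C := by
    rw [hX_def]
    exact closure_minimal hmil2 hCcl
  exact hCneX (Set.Subset.antisymm hCX hXC)
end

section
/- Let G be a topological group and let K, L, P be affine G-flows with affine extensions φ: K → L, η: K → P, and ψ: P → L satisfying φ = ψ ∘ η. If φ is proximally irreducible, then η is proximally irreducible. -/
universe u v w x

/-- If an affine extension `φ : K → L` factors as `ψ ∘ η` through affine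
extensions `η : K → P` and `ψ : P → L`, and `φ` is proximally irreducible, then so is `η`. -/
theorem statement13 {G : Type u} [Group G] [TopologicalSpace G] [IsTopologicalGroup G]
    (K : AffineFlow.{u, v} G) (L : AffineFlow.{u, w} G) (P : AffineFlow.{u, x} G)
    (φ : K.E → L.E) (η : K.E → P.E) (ψ : P.E → L.E)
    (hη : IsAffineExtension K P η) (hψ : IsAffineExtension P L ψ)
    (hfac : ∀ z ∈ K.carrier, φ z = ψ (η z))
    (hφ : IsProximallyIrreducibleExt K L φ) :
    IsProximallyIrreducibleExt K P η := by
  obtain ⟨⟨hψmap, hψcont, _, hψaff⟩, hψsurj⟩ := hψ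
  have hKcl : closure (K.carrier.extremePoints ℝ) ⊆ K.carrier :=
    closure_minimal (extremePoints_subset) K.isCompact'.isClosed
  have hPcl : closure (P.carrier.extremePoints ℝ) ⊆ P.carrier :=
    closure_minimal (extremePoints_subset) P.isCompact'.isClosed
  -- every extreme point of L lifts to an extreme point of P
  have lift : ∀ z ∈ L.carrier.extremePoints ℝ, ∃ y ∈ P.carrier.extremePoints ℝ, ψ y = z := by
    intro z hz
    obtain ⟨hzL, hzext⟩ := mem_extremePoints.1 hz
    set F : Set P.E := P.carrier ∩ ψ ⁻¹' {z} with hF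
    have hFne : F.Nonempty := by
      have : z ∈ ψ '' P.carrier := hψsurj ▸ hzL
      obtain ⟨p, hp, hpz⟩ := this
      exact ⟨p, hp, by simpa using hpz⟩
    have hFclosed : IsClosed F :=
      hψcont.preimage_isClosed_of_isClosed P.isCompact'.isClosed isClosed_singleton
    have hFcomp : IsCompact F :=
      P.isCompact'.of_isClosed_subset hFclosed Set.inter_subset_left
    obtain ⟨y, hy⟩ := hFcomp.extremePoints_nonempty hFne
    obtain ⟨⟨hyP, hyz⟩, hyext⟩ := mem_extremePoints.1 hy
    refine ⟨y, mem_extremePoints.2 ⟨hyP, ?_⟩, hyz⟩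
    intro x₁ hx₁ x₂ hx₂ hseg
    obtain ⟨a, b, ha, hb, hab, hxy⟩ := hseg
    have hb' : b = 1 - a := by linarith
    have hpsi : ψ y = a • ψ x₁ + (1 - a) • ψ x₂ := by
      rw [← hxy, hb', hψaff x₁ hx₁ x₂ hx₂ a ha.le (by linarith)]
    have hzseg : z ∈ openSegment ℝ (ψ x₁) (ψ x₂) := by
      refine ⟨a, b, ha, hb, hab, ?_⟩
      rw [hb', ← hpsi, hyz]
    obtain ⟨h1, h2⟩ := hzext _ (hψmap hx₁) _ (hψmap hx₂) hzseg
    have hx₁F : x₁ ∈ F := ⟨hx₁, by simpa using h1⟩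
    have hx₂F : x₂ ∈ F := ⟨hx₂, by simpa using h2⟩
    exact hyext _ hx₁F _ hx₂F ⟨a, b, ha, hb, hab, hxy⟩
  -- the image of the closure of extreme points of P is closed and contains cl(ext L)
  have hPcompcl : IsCompact (closure (P.carrier.extremePoints ℝ)) :=
    P.isCompact'.of_isClosed_subset isClosed_closure hPcl
  have himcl : IsClosed (ψ '' closure (P.carrier.extremePoints ℝ)) :=
    (hPcompcl.image_of_continuousOn (hψcont.mono hPcl)).isClosed
  have hsub : closure (L.carrier.extremePoints ℝ) ⊆ ψ '' closure (P.carrier.extremePoints ℝ) := by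
    refine closure_minimal (fun z hz => ?_) himcl
    obtain ⟨y, hy, hyz⟩ := lift z hz
    exact ⟨y, subset_closure hy, hyz⟩
  refine ⟨hη, fun C hC hmeet => ?_⟩
  refine hφ.2 C hC fun z hz => ?_
  obtain ⟨y, hy, hyz⟩ := hsub hz
  obtain ⟨x, hxC, hx⟩ := hmeet y hy
  refine ⟨x, hxC, convexHull_mono ?_ hx⟩
  rintro w ⟨hw1, hw2⟩
  refine ⟨hw1, ?_⟩
  simp only [Set.mem_preimage, Set.mem_singleton_iff] at hw2 ⊢
  rw [hfac w (hKcl hw1), hw2, hyz]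
end

section
/- Let G be a Polish group, X a G-flow, and x₀ ∈ X a point whose orbit is comeager in X. Let Y be a G-flow, φ: Y → X an extension, and C ⊆ φ⁻¹({x₀}) a closed subset that is invariant under the stabilizer Stab(x₀) = {g ∈ G : g·x₀ = x₀}. Then cl(G·C) ∩ φ⁻¹({x₀}) = C, where G·C = {g·c : g ∈ G, c ∈ C}. -/
open Set Filter Topology TopologicalSpace Pointwise

namespace Stmt15

variable {X : Type*} [TopologicalSpace X]

/-- countable union of meagre sets is meagre -/
lemma isMeagre_iUnion' {ι : Sort*} [Countable ι] {f : ι → Set X} (h : ∀ i, IsMeagre (f i)) :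
    IsMeagre (⋃ i, f i) := by
  rw [IsMeagre, compl_iUnion]; exact (countable_iInter_mem).mpr h

/-- the set of points where `E` is locally non-meagre -/
def locNM (E : Set X) : Set X := {x | ∀ N ∈ 𝓝 x, ¬ IsMeagre (E ∩ N)}

lemma isClosed_locNM (E : Set X) : IsClosed (locNM E) := by
  rw [← isOpen_compl_iff, isOpen_iff_forall_mem_open]
  intro x hx
  simp only [locNM, mem_compl_iff, mem_setOf_eq, not_forall] at hx
  obtain ⟨N, hN, hm⟩ := hx
  rcases mem_nhds_iff.1 hN with ⟨O, hON, hO, hxO⟩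
  refine ⟨O, fun y hy hyl => ?_, hO, hxO⟩
  simp only [not_not] at hm
  exact hyl O (hO.mem_nhds hy) (hm.mono (inter_subset_inter_right _ hON))

lemma isMeagre_union {s t : Set X} (hs : IsMeagre s) (ht : IsMeagre t) : IsMeagre (s ∪ t) := by
  rw [IsMeagre, compl_union]; exact inter_mem hs ht

lemma locNM_subset_closure (E : Set X) : locNM E ⊆ closure E := by
  intro x hx
  rw [mem_closure_iff_nhds]
  intro N hN
  rcases eq_empty_or_nonempty (E ∩ N) with he | he
  · exact absurd (by rw [he]; exact IsMeagre.empty) (hx N hN)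
  · exact he.imp fun y hy => ⟨hy.2, hy.1⟩

lemma nonmeager_of_mem_locNM {E : Set X} {x : X} (hx : x ∈ locNM E) : ¬ IsMeagre E := by
  have := hx univ univ_mem
  simpa using this

lemma symmDiff_meagre {S u : Set X} (h : S =ᵇ u) : IsMeagre (S \ u) ∧ IsMeagre (u \ S) := by
  have hres : {x | x ∈ S ↔ x ∈ u} ∈ residual X := by
    have := (eventuallyEq_set).1 h
    exact this
  constructor
  · rw [IsMeagre]
    refine Filter.mem_of_superset hres fun x hx => ?_
    simp only [mem_compl_iff, mem_diff, not_and, not_not]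
    intro hxS; exact hx.1 hxS
  · rw [IsMeagre]
    refine Filter.mem_of_superset hres fun x hx => ?_
    simp only [mem_compl_iff, mem_diff, not_and, not_not]
    intro hxu; exact hx.2 hxu

/-- The hull lemma: if `E = ⋃ n, En` and each `En \ locNM En` is meagre, then
`locNM E \ ⋃ n, locNM (En)` is meagre. -/
lemma hull_lemma {E : Set X} {En : ℕ → Set X} (hE : E = ⋃ n, En n)
    (h1 : ∀ n, IsMeagre (En n \ locNM (En n))) :
    IsMeagre (locNM E \ ⋃ n, locNM (En n)) := by
  set S := locNM E \ ⋃ n, locNM (En n) with hSdef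
  by_contra hS
  have hBM : BaireMeasurableSet S := by
    refine BaireMeasurableSet.diff ?_ ?_
    · exact (isClosed_locNM E).isOpen_compl.baireMeasurableSet.of_compl
    · exact BaireMeasurableSet.iUnion fun n =>
        (isClosed_locNM (En n)).isOpen_compl.baireMeasurableSet.of_compl
  obtain ⟨u, hu, hequ⟩ := hBM.residualEq_isOpen
  obtain ⟨hd1, hd2⟩ := symmDiff_meagre hequ
  -- S ∩ u is nonmeager hence nonempty
  have hSu : ¬ IsMeagre (S ∩ u) := by
    intro h
    apply hS
    have : S ⊆ (S \ u) ∪ (S ∩ u) := by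
      intro x hx; by_cases hxu : x ∈ u
      · exact Or.inr ⟨hx, hxu⟩
      · exact Or.inl ⟨hx, hxu⟩
    exact (isMeagre_union hd1 h).mono this
  have hne : (S ∩ u).Nonempty := by
    rcases eq_empty_or_nonempty (S ∩ u) with he | he
    · exact absurd (he ▸ IsMeagre.empty) hSu
    · exact he
  obtain ⟨p, hpS, hpu⟩ := hne
  have hpH : p ∈ locNM E := hpS.1
  have hEu : ¬ IsMeagre (E ∩ u) := hpH u (hu.mem_nhds hpu)
  have hn : ∃ n, ¬ IsMeagre (En n ∩ u) := by
    by_contra hall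
    push_neg at hall
    apply hEu
    have : E ∩ u = ⋃ n, (En n ∩ u) := by rw [hE, iUnion_inter]
    rw [this]
    exact isMeagre_iUnion' hall
  obtain ⟨n, hn⟩ := hn
  have hln : ¬ IsMeagre (locNM (En n) ∩ u) := by
    intro h
    apply hn
    have : En n ∩ u ⊆ (En n \ locNM (En n)) ∪ (locNM (En n) ∩ u) := by
      intro x hx
      by_cases hxl : x ∈ locNM (En n)
      · exact Or.inr ⟨hxl, hx.2⟩
      · exact Or.inl ⟨hx.1, hxl⟩
    exact (isMeagre_union (h1 n) h).mono this
  apply hln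
  refine hd2.mono fun x hx => ?_
  refine ⟨hx.2, fun hxS => ?_⟩
  exact (hxS.2 (mem_iUnion.2 ⟨n, hx.1⟩))

section Group

variable {G : Type*} [Group G] [TopologicalSpace G] [IsTopologicalGroup G]
variable {X : Type*} [TopologicalSpace X] [MulAction G X] [ContinuousSMul G X]

lemma smul_image_isMeagre (g : G) {s : Set X} (h : IsMeagre s) : IsMeagre ((g • ·) '' s) := by
  have e : ((g • ·) '' s) = (g⁻¹ • ·) ⁻¹' s := by
    ext x
    simp only [mem_image, mem_preimage]
    constructor
    · rintro ⟨y, hy, rfl⟩; simpa using hy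
    · intro hx; exact ⟨g⁻¹ • x, hx, by simp⟩
  rw [e]
  exact h.preimage_of_isOpenMap (continuous_const_smul _) (isOpenMap_smul _)

variable (x₀ : X)

/-- the image of a set of group elements in the orbit of `x₀` -/
def orbIm (S : Set G) : Set X := (fun g : G => g • x₀) '' S

lemma continuous_pi : Continuous (fun g : G => g • x₀) := continuous_id.smul continuous_const

lemma orbIm_smul (g : G) (S : Set G) : (g • ·) '' (orbIm x₀ S) = orbIm x₀ ((g * ·) '' S) := by
  simp only [orbIm, image_image, smul_smul]

lemma orbIm_mono {S T : Set G} (h : S ⊆ T) : orbIm x₀ S ⊆ orbIm x₀ T := image_mono h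

/-- (†): the orbit image of a nonempty open set is non-meagre, provided the orbit of `x₀`
is comeagre. -/
lemma orbIm_nonmeager [SeparableSpace G] [Nonempty X] [BaireSpace X]
    (hx₀ : IsMeagre ((MulAction.orbit G x₀)ᶜ : Set X))
    {W : Set G} (hW : IsOpen W) {g₀ : G} (hg₀ : g₀ ∈ W) : ¬ IsMeagre (orbIm x₀ W) := by
  intro hmeag
  obtain ⟨u, hu⟩ := exists_dense_seq G
  -- the orbit is covered by countably many translates of `orbIm W`
  have hcov : MulAction.orbit G x₀ ⊆ ⋃ n, (fun x => (u n * g₀⁻¹) • x) '' (orbIm x₀ W) := by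
    rintro - ⟨g, rfl⟩
    have hopen : IsOpen ((· * g₀) '' (g • W⁻¹)) :=
      (isOpenMap_mul_right g₀) _ ((hW.inv).smul g)
    have hne : ((· * g₀) '' (g • W⁻¹)).Nonempty := by
      refine ⟨g * g₀⁻¹ * g₀, ⟨g * g₀⁻¹, ?_, rfl⟩⟩
      exact ⟨g₀⁻¹, by simpa using hg₀, by simp [smul_eq_mul]⟩
    obtain ⟨n, hn⟩ := hu.exists_mem_open hopen hne
    obtain ⟨y, ⟨b, hb, rfl⟩, hyg⟩ := hn
    rw [Set.mem_inv] at hb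
    refine mem_iUnion.2 ⟨n, ⟨b⁻¹ • x₀, ⟨b⁻¹, hb, rfl⟩, ?_⟩⟩
    have hun : u n = g * b * g₀ := by simpa [smul_eq_mul] using hyg.symm
    show (u n * g₀⁻¹) • b⁻¹ • x₀ = g • x₀
    rw [hun, smul_smul]
    congr 1
    group
  have horb : IsMeagre (MulAction.orbit G x₀) := by
    refine (isMeagre_iUnion' fun n => ?_).mono hcov
    exact smul_image_isMeagre _ hmeag
  have huniv : IsMeagre (univ : Set X) := by
    have : (univ : Set X) ⊆ (MulAction.orbit G x₀) ∪ (MulAction.orbit G x₀)ᶜ := by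
      intro x _; exact (em _).imp id id
    exact (isMeagre_union horb hx₀).mono this
  rw [IsMeagre, compl_univ] at huniv
  have := dense_of_mem_residual huniv
  simpa [Set.eq_empty_iff_forall_notMem] using this.nonempty

/-- Banach-type localization for orbit images: `orbIm T` is meagre off its set of local
non-meagreness, for arbitrary `T ⊆ G`. -/
lemma orbIm_meagre_off_locNM [SecondCountableTopology G] (T : Set G) :
    IsMeagre (orbIm x₀ T \ locNM (orbIm x₀ T)) := by
  obtain ⟨B, hBc, -, hB⟩ := exists_countable_basis G
  set Bad : Set (Set G) := {b ∈ B | IsMeagre (orbIm x₀ (T ∩ b))} with hBad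
  have hsub : orbIm x₀ T \ locNM (orbIm x₀ T) ⊆ ⋃ b ∈ Bad, orbIm x₀ (T ∩ b) := by
    rintro p ⟨⟨g, hg, rfl⟩, hp⟩
    simp only [locNM, mem_setOf_eq, not_forall] at hp
    obtain ⟨N, hN, hmea⟩ := hp
    simp only [not_not] at hmea
    have : g ∈ (fun g : G => g • x₀) ⁻¹' (interior N) := by
      simp only [mem_preimage]
      exact mem_interior_iff_mem_nhds.2 hN
    obtain ⟨b, hbB, hgb, hbsub⟩ := hB.exists_subset_of_mem_open this
      ((continuous_pi x₀).isOpen_preimage _ isOpen_interior)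
    refine mem_iUnion₂.2 ⟨b, ⟨hbB, ?_⟩, ⟨g, ⟨hg, hgb⟩, rfl⟩⟩
    refine hmea.mono ?_
    rintro - ⟨h, ⟨hhT, hhb⟩, rfl⟩
    exact ⟨⟨h, hhT, rfl⟩, interior_subset (hbsub hhb)⟩
  refine IsMeagre.mono hsub ?_
  rw [show (⋃ b ∈ Bad, orbIm x₀ (T ∩ b)) = ⋃ b : Bad, orbIm x₀ (T ∩ (b : Set G)) from by
    simp [iUnion_coe_set]]
  have : Countable Bad := (hBc.mono (sep_subset _ _)).to_subtype
  exact isMeagre_iUnion' fun b => b.2.2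

end Group

/-- A Suslin scheme built from a root open set `W`, closed root pieces `K n`, and
closed balls `Bl n k`. The head of the list is the most recent index. -/
def schemeT {G : Type*} (W : Set G) (K : ℕ → Set G) (Bl : ℕ → ℕ → Set G) : List ℕ → Set G
  | [] => W
  | n :: [] => K n
  | n :: (m :: t) => schemeT W K Bl (m :: t) ∩ Bl n (m :: t).length

section Scheme

variable {G : Type*} {W : Set G} {K : ℕ → Set G} {Bl : ℕ → ℕ → Set G}

lemma schemeT_nil : schemeT W K Bl [] = W := rfl

lemma schemeT_single (n : ℕ) : schemeT W K Bl [n] = K n := rfl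

lemma schemeT_cons (n : ℕ) {s : List ℕ} (hs : s ≠ []) :
    schemeT W K Bl (n :: s) = schemeT W K Bl s ∩ Bl n s.length := by
  cases s with
  | nil => exact absurd rfl hs
  | cons m t => rfl

lemma schemeT_cons_subset (hK : ∀ n, K n ⊆ W) (n : ℕ) (s : List ℕ) :
    schemeT W K Bl (n :: s) ⊆ schemeT W K Bl s := by
  cases s with
  | nil => simpa [schemeT_single, schemeT_nil] using hK n
  | cons m t => rw [schemeT_cons n (by simp)]; exact Set.inter_subset_left

lemma schemeT_eq_iUnion (hK : W = ⋃ n, K n) (hBl : ∀ k (g : G), ∃ n, g ∈ Bl n k) (s : List ℕ) :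
    schemeT W K Bl s = ⋃ n, schemeT W K Bl (n :: s) := by
  cases s with
  | nil => simpa [schemeT_nil, schemeT_single] using hK
  | cons m t =>
      ext g
      simp only [Set.mem_iUnion, schemeT_cons _ (List.cons_ne_nil m t)]
      constructor
      · intro hg
        obtain ⟨n, hn⟩ := hBl (m :: t).length g
        exact ⟨n, hg, hn⟩
      · rintro ⟨n, hg, -⟩; exact hg

lemma schemeT_isClosed [TopologicalSpace G] (hK : ∀ n, IsClosed (K n))
    (hBl : ∀ n k, IsClosed (Bl n k)) {s : List ℕ} (hs : s ≠ []) :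
    IsClosed (schemeT W K Bl s) := by
  induction s with
  | nil => exact absurd rfl hs
  | cons n t ih =>
      cases t with
      | nil => exact hK n
      | cons m r => rw [schemeT_cons n (by simp)]; exact (ih (by simp)).inter (hBl _ _)

end Scheme

/-- In a regular T1 space, a point lying in the closure of every open neighbourhood of `q`
equals `q`. -/
lemma eq_of_mem_closure_nhds {Z : Type*} [TopologicalSpace Z] [RegularSpace Z] [T1Space Z]
    {p q : Z} (h : ∀ M : Set Z, IsOpen M → q ∈ M → p ∈ closure M) : p = q := by
  by_contra hpq
  obtain ⟨t, ht, htc, hts⟩ := exists_mem_nhds_isClosed_subset (s := ({p}ᶜ : Set Z))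
    ((isOpen_compl_singleton).mem_nhds (by simpa using (Ne.symm hpq)))
  have h1 : p ∈ closure (interior t) := h _ isOpen_interior (mem_interior_iff_mem_nhds.2 ht)
  have h2 : closure (interior t) ⊆ t := htc.closure_subset_iff.mpr interior_subset
  exact (hts (h2 h1)) rfl

section Key

variable {G : Type*} [Group G] [TopologicalSpace G] [IsTopologicalGroup G] [PolishSpace G]
variable {X : Type*} [TopologicalSpace X] [RegularSpace X] [T1Space X]
variable [MulAction G X] [ContinuousSMul G X]

/-- **Key lemma**: for an open `W ⊆ G`, the set of points where `orbIm x₀ W` is locally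
non-meagre is contained in `orbIm x₀ W` up to a meagre set. -/
lemma locNM_orbIm_diff_isMeagre (x₀ : X) {W : Set G} (hW : IsOpen W) :
    IsMeagre (locNM (orbIm x₀ W) \ orbIm x₀ W) := by
  letI := upgradeIsCompletelyMetrizable G
  haveI : Nonempty G := ⟨1⟩
  obtain ⟨u, hu⟩ := exists_dense_seq G
  set K : ℕ → Set G := fun n => {g | ∀ h, h ∉ W → (1:ℝ)/(n+1) ≤ dist g h} with hKdef
  have hKclosed : ∀ n, IsClosed (K n) := by
    intro n
    have : K n = ⋂ h ∈ Wᶜ, {g | (1:ℝ)/(n+1) ≤ dist g h} := by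
      ext g; simp [hKdef]
    rw [this]
    exact isClosed_biInter fun h _ =>
      isClosed_le continuous_const (continuous_id.dist continuous_const)
  have hKsub : ∀ n, K n ⊆ W := by
    intro n g hg
    by_contra hgW
    have h1 := hg g hgW
    rw [dist_self] at h1
    have h2 : (0:ℝ) < 1/(n+1) := by positivity
    linarith
  have hKcov : W = ⋃ n, K n := by
    apply Subset.antisymm
    · intro g hg
      obtain ⟨ε, hε, hball⟩ := Metric.isOpen_iff.1 hW g hg
      obtain ⟨n, hn⟩ := exists_nat_one_div_lt hε
      refine mem_iUnion.2 ⟨n, fun h hh => ?_⟩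
      have : ¬ dist h g < ε := fun hc => hh (hball hc)
      rw [dist_comm]
      linarith
    · exact iUnion_subset hKsub
  set Bl : ℕ → ℕ → Set G := fun n k => Metric.closedBall (u n) ((1/2 : ℝ)^k) with hBldef
  have hBlcov : ∀ k (g : G), ∃ n, g ∈ Bl n k := by
    intro k g
    obtain ⟨n, hn⟩ := hu.exists_dist_lt g (by positivity : (0:ℝ) < (1/2)^k)
    exact ⟨n, by simpa [hBldef, Metric.mem_closedBall] using hn.le⟩
  have hBlclosed : ∀ n k, IsClosed (Bl n k) := fun n k => Metric.isClosed_closedBall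
  set M : List ℕ → Set X := fun l => locNM (orbIm x₀ (schemeT W K Bl l)) \
      ⋃ n, locNM (orbIm x₀ (schemeT W K Bl (n :: l))) with hMdef
  have hMmeag : ∀ l, IsMeagre (M l) := by
    intro l
    refine hull_lemma ?_ (fun n => orbIm_meagre_off_locNM x₀ _)
    conv_lhs => rw [schemeT_eq_iUnion hKcov hBlcov l]
    simp [orbIm, image_iUnion]
  have hsub : locNM (orbIm x₀ W) \ orbIm x₀ W ⊆ ⋃ l : List ℕ, M l := by
    intro p hp
    by_contra hpM
    simp only [mem_iUnion, not_exists] at hpM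
    have hp0 : p ∈ locNM (orbIm x₀ (schemeT W K Bl [])) := hp.1
    have step : ∀ l : List ℕ, p ∈ locNM (orbIm x₀ (schemeT W K Bl l)) →
        ∃ n, p ∈ locNM (orbIm x₀ (schemeT W K Bl (n :: l))) := by
      intro l hl
      by_contra hno
      push_neg at hno
      exact hpM l ⟨hl, by simpa using hno⟩
    choose nxt hnxt using step
    let F : ℕ → {l : List ℕ // p ∈ locNM (orbIm x₀ (schemeT W K Bl l))} :=
      fun k => Nat.rec ⟨[], hp0⟩ (fun _ ih => ⟨nxt ih.1 ih.2 :: ih.1, hnxt ih.1 ih.2⟩) k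
    have hFsucc : ∀ k, (F (k+1)).1 = nxt (F k).1 (F k).2 :: (F k).1 := fun k => rfl
    have hFlen : ∀ k, ((F k).1).length = k := by
      intro k; induction k with
      | zero => rfl
      | succ k ih => rw [hFsucc]; simp [ih]
    have hFne' : ∀ k, 1 ≤ k → (F k).1 ≠ [] := by
      intro k hk habs
      have := hFlen k
      rw [habs] at this
      simp at this
      omega
    have hFmem : ∀ k, p ∈ locNM (orbIm x₀ (schemeT W K Bl (F k).1)) := fun k => (F k).2
    have hFne : ∀ k, (schemeT W K Bl (F k).1).Nonempty := by
      intro k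
      have hnm := nonmeager_of_mem_locNM (hFmem k)
      rcases eq_empty_or_nonempty (schemeT W K Bl (F k).1) with he | he
      · refine absurd ?_ hnm
        rw [he]
        simpa [orbIm] using IsMeagre.empty
      · exact he
    have hFnested : ∀ k m, k ≤ m → schemeT W K Bl (F m).1 ⊆ schemeT W K Bl (F k).1 := by
      intro k m hkm
      induction hkm with
      | refl => exact subset_rfl
      | step h ih => exact fun x hx => ih ((hFsucc _ ▸ schemeT_cons_subset hKsub _ _) hx)
    have hFball : ∀ k, schemeT W K Bl (F (k+2)).1 ⊆
        Metric.closedBall (u (nxt (F (k+1)).1 (F (k+1)).2)) ((1/2:ℝ)^(k+1)) := by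
      intro k
      rw [hFsucc (k+1), schemeT_cons _ (hFne' (k+1) (by omega)), hFlen (k+1)]
      exact inter_subset_right
    choose gs hgs using hFne
    have hdistb : ∀ k m, k + 2 ≤ m → dist (gs m) (gs (k+2)) ≤ (1/2:ℝ)^k := by
      intro k m hm
      have h1 := hFball k (hFnested (k+2) m hm (hgs m))
      have h2 := hFball k (hgs (k+2))
      rw [Metric.mem_closedBall] at h1 h2
      calc dist (gs m) (gs (k+2)) ≤ dist (gs m) _ + dist (gs (k+2)) _ := dist_triangle_right _ _ _
        _ ≤ (1/2:ℝ)^(k+1) + (1/2:ℝ)^(k+1) := add_le_add h1 h2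
        _ = (1/2:ℝ)^k := by rw [pow_succ]; ring
    have hcauchy : CauchySeq gs := by
      rw [Metric.cauchySeq_iff']
      intro ε hε
      obtain ⟨k, hk⟩ := exists_pow_lt_of_lt_one hε (by norm_num : (1/2:ℝ) < 1)
      refine ⟨k+2, fun m hm => ?_⟩
      exact lt_of_le_of_lt (hdistb k m hm) hk
    obtain ⟨g, hg⟩ := cauchySeq_tendsto_of_complete hcauchy
    have hgT : ∀ k, 1 ≤ k → g ∈ schemeT W K Bl (F k).1 := by
      intro k hk
      have hcl : IsClosed (schemeT W K Bl (F k).1) :=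
        schemeT_isClosed hKclosed hBlclosed (hFne' k hk)
      exact hcl.mem_of_tendsto hg (eventually_atTop.2
        ⟨k, fun m hm => hFnested k m hm (hgs m)⟩)
    have hgW : g ∈ W := hFnested 0 1 (by omega) (hgT 1 le_rfl)
    have hpg : p = g • x₀ := by
      refine eq_of_mem_closure_nhds (fun M' hM' hgM' => ?_)
      have hpre : g ∈ (fun h : G => h • x₀) ⁻¹' M' := hgM'
      obtain ⟨ε, hε, hball⟩ := Metric.isOpen_iff.1
        (((continuous_pi x₀)).isOpen_preimage _ hM') g hpre
      obtain ⟨k, hk⟩ := exists_pow_lt_of_lt_one hε (by norm_num : (1/2:ℝ) < 1)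
      have hTsub : schemeT W K Bl (F (k+2)).1 ⊆ Metric.ball g ε := by
        intro t ht
        have h1 := hFball k ht
        have h2 := hFball k (hgT (k+2) (by omega))
        rw [Metric.mem_closedBall] at h1 h2
        rw [Metric.mem_ball]
        calc dist t g ≤ dist t _ + dist g _ := dist_triangle_right _ _ _
          _ ≤ (1/2:ℝ)^(k+1) + (1/2:ℝ)^(k+1) := add_le_add h1 h2
          _ = (1/2:ℝ)^k := by rw [pow_succ]; ring
          _ < ε := hk
      have himg : orbIm x₀ (schemeT W K Bl (F (k+2)).1) ⊆ M' := by
        rintro - ⟨h, hh, rfl⟩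
        exact hball (hTsub hh)
      exact (closure_mono himg) ((locNM_subset_closure _) (hFmem (k+2)))
    exact hp.2 ⟨g, hgW, hpg.symm⟩
  exact (isMeagre_iUnion' hMmeag).mono hsub

end Key

section Pin

variable {G : Type*} [Group G] [TopologicalSpace G] [IsTopologicalGroup G] [PolishSpace G]
variable {X : Type*} [TopologicalSpace X] [T2Space X] [CompactSpace X] [Nonempty X]
variable [MulAction G X] [ContinuousSMul G X]

/-- **Pin lemma**: if the orbit of `x₀` is comeagre, then for every neighbourhood `V` of `1`
there is an open neighbourhood `U` of `x₀` in which `orbIm x₀ V` is comeagre. -/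
lemma pin (x₀ : X) (hx₀ : IsMeagre ((MulAction.orbit G x₀)ᶜ : Set X))
    {V : Set G} (hV : V ∈ 𝓝 (1 : G)) :
    ∃ U : Set X, IsOpen U ∧ x₀ ∈ U ∧ IsMeagre (U \ orbIm x₀ V) := by
  -- a small symmetric-ish neighbourhood `W` of `1` with `W⁻¹ * W ⊆ V`
  have hc : Continuous (fun q : G × G => q.1⁻¹ * q.2) := (continuous_fst.inv).mul continuous_snd
  have hpre : (fun q : G × G => q.1⁻¹ * q.2) ⁻¹' V ∈ 𝓝 ((1 : G), (1 : G)) := by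
    refine hc.continuousAt.preimage_mem_nhds ?_
    simpa using hV
  rw [nhds_prod_eq, Filter.mem_prod_iff] at hpre
  obtain ⟨A, hA, B, hB, hAB⟩ := hpre
  set W : Set G := interior (A ∩ B) with hWdef
  have hWopen : IsOpen W := isOpen_interior
  have hW1 : (1 : G) ∈ W := mem_interior_iff_mem_nhds.2 (inter_mem hA hB)
  have hWmul : ∀ a ∈ W, ∀ b ∈ W, a⁻¹ * b ∈ V := by
    intro a ha b hb
    have ha' := interior_subset ha
    have hb' := interior_subset hb
    exact hAB (Set.mk_mem_prod ha'.1 hb'.2)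
  set E : Set X := orbIm x₀ W with hEdef
  have hnm : ¬ IsMeagre E := orbIm_nonmeager x₀ hx₀ hWopen hW1
  set HL : Set X := locNM E with hHLdef
  set U₁ : Set X := interior HL with hU₁def
  have hHLmI : IsMeagre (HL \ U₁) := by
    have hint : interior (HL \ U₁) = ∅ := by
      rw [eq_empty_iff_forall_notMem]
      intro x hx
      have h1 : interior (HL \ U₁) ⊆ U₁ :=
        interior_mono (diff_subset.trans subset_rfl) |>.trans (by rw [hU₁def])
      exact (interior_subset hx).2 (h1 hx)
    rw [IsMeagre]
    refine residual_of_dense_open ?_ ?_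
    · exact ((isClosed_locNM E).sdiff isOpen_interior).isOpen_compl
    · exact interior_eq_empty_iff_dense_compl.1 hint
  have hEU₁ : IsMeagre (E \ U₁) := by
    refine (isMeagre_union (orbIm_meagre_off_locNM x₀ W) hHLmI).mono ?_
    intro x hx
    by_cases hHL : x ∈ HL
    · exact Or.inr ⟨hHL, hx.2⟩
    · exact Or.inl ⟨hx.1, hHL⟩
  have hEex : (E ∩ U₁).Nonempty := by
    rcases eq_empty_or_nonempty (E ∩ U₁) with he | he
    · exfalso
      apply hnm
      have : E ⊆ E \ U₁ := by
        intro x hx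
        refine ⟨hx, fun hU => ?_⟩
        rw [eq_empty_iff_forall_notMem] at he
        exact he x ⟨hx, hU⟩
      exact hEU₁.mono this
    · exact he
  obtain ⟨q, ⟨w, hwW, rfl⟩, hqU₁⟩ := hEex
  have hU₁E : IsMeagre (U₁ \ E) := by
    refine (locNM_orbIm_diff_isMeagre x₀ hWopen).mono ?_
    intro x hx
    exact ⟨interior_subset hx.1, hx.2⟩
  refine ⟨(w⁻¹ • ·) '' U₁, (isOpenMap_smul w⁻¹) _ isOpen_interior, ?_, ?_⟩
  · exact ⟨w • x₀, hqU₁, by simp⟩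
  · have hsub : ((w⁻¹ • ·) '' U₁) \ orbIm x₀ V ⊆ (w⁻¹ • ·) '' (U₁ \ E) := by
      rintro x ⟨⟨y, hyU₁, rfl⟩, hxV⟩
      refine ⟨y, ⟨hyU₁, fun hyE => ?_⟩, rfl⟩
      obtain ⟨a, haW, rfl⟩ := hyE
      exact hxV ⟨w⁻¹ * a, hWmul w hwW a haW, (smul_smul _ _ _).symm⟩
    exact (smul_image_isMeagre w⁻¹ hU₁E).mono hsub

end Pin

end Stmt15




universe u v w x

/-- A `G`-flow: a nonempty compact Hausdorff space equipped with a continuous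
action of the topological group `G` by homeomorphisms. -/
structure GFlow (G : Type u) [Group G] [TopologicalSpace G] [IsTopologicalGroup G] where
  /-- the underlying phase space -/
  X : Type v
  [instTopologicalSpace : TopologicalSpace X]
  [instCompactSpace : CompactSpace X]
  [instT2Space : T2Space X]
  [instNonempty : Nonempty X]
  [instMulAction : MulAction G X]
  [instContinuousSMul : ContinuousSMul G X]

attribute [instance] GFlow.instTopologicalSpace GFlow.instCompactSpace GFlow.instT2Space
  GFlow.instNonempty GFlow.instMulAction GFlow.instContinuousSMul

variable {G : Type u} [Group G] [TopologicalSpace G] [IsTopologicalGroup G]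

/-- A `G`-map between `G`-flows: a continuous `G`-equivariant map. -/
def IsGMap (F₁ : GFlow.{u, v} G) (F₂ : GFlow.{u, w} G) (f : F₁.X → F₂.X) : Prop :=
  Continuous f ∧ ∀ (g : G) (x : F₁.X), f (g • x) = g • f x

/-- An extension of `G`-flows: a surjective `G`-map. -/
def IsExtension (F₁ : GFlow.{u, v} G) (F₂ : GFlow.{u, w} G) (f : F₁.X → F₂.X) : Prop :=
  IsGMap F₁ F₂ f ∧ Function.Surjective f

/-- A subflow: a nonempty closed `G`-invariant subset. -/
def IsSubflow (F : GFlow.{u, v} G) (C : Set F.X) : Prop :=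
  C.Nonempty ∧ IsClosed C ∧ ∀ g : G, ∀ x ∈ C, g • x ∈ C

/-- A `G`-flow is minimal if it has no proper subflows. -/
def GFlow.IsMinimal (F : GFlow.{u, v} G) : Prop :=
  ∀ C : Set F.X, IsSubflow F C → C = Set.univ

/-- A `G`-flow `F` is `G`-projective if for all `G`-flows `Y`, `Z`, every `G`-map
`φ : F → Y` and every extension `π : Z → Y`, there is a `G`-map `ψ : F → Z`
with `π ∘ ψ = φ`. -/
def IsGProjective (F : GFlow.{u, v} G) : Prop :=
  ∀ (Y : GFlow.{u, w} G) (Z : GFlow.{u, x} G) (φ : F.X → Y.X) (π : Z.X → Y.X),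
    IsGMap F Y φ → IsExtension Z Y π →
    ∃ ψ : F.X → Z.X, IsGMap F Z ψ ∧ π ∘ ψ = φ

/-- **Statement 15.** Let `G` be a Polish group, `X` a `G`-flow with a point `x₀` whose
orbit is comeager, `φ : Y → X` an extension, and `C ⊆ φ⁻¹({x₀})` a closed set invariant
under the stabilizer of `x₀`.  Then `cl(G·C) ∩ φ⁻¹({x₀}) = C`. -/
theorem statement15 {G : Type u} [Group G] [TopologicalSpace G] [IsTopologicalGroup G]
    [PolishSpace G]
    (F : GFlow.{u, v} G) (x₀ : F.X) (hx₀ : IsMeagre ((MulAction.orbit G x₀)ᶜ : Set F.X))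
    (Y : GFlow.{u, w} G) (φ : Y.X → F.X) (hφ : IsExtension Y F φ)
    (C : Set Y.X) (hCsub : C ⊆ φ ⁻¹' {x₀}) (hCclosed : IsClosed C)
    (hCinv : ∀ g : G, g • x₀ = x₀ → ∀ c ∈ C, g • c ∈ C) :
    closure {y : Y.X | ∃ g : G, ∃ c ∈ C, y = g • c} ∩ φ ⁻¹' {x₀} = C := by
  classical
  have hφc : Continuous φ := hφ.1.1
  have hφeq : ∀ (g : G) (y : Y.X), φ (g • y) = g • φ y := hφ.1.2
  apply Subset.antisymm
  · rintro p ⟨hpD, hpφ⟩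
    have hφp : φ p = x₀ := hpφ
    rw [← hCclosed.closure_eq]
    rw [mem_closure_iff]
    intro O hO hpO
    -- continuity of the action at (1, p)
    have hsm : Continuous (fun q : G × Y.X => q.1 • q.2) := continuous_smul
    have hpre : (fun q : G × Y.X => q.1 • q.2) ⁻¹' O ∈ 𝓝 ((1:G), p) := by
      refine hsm.continuousAt.preimage_mem_nhds ?_
      simpa using hO.mem_nhds hpO
    rw [nhds_prod_eq, Filter.mem_prod_iff] at hpre
    obtain ⟨V₀, hV₀, P, hP, hVP⟩ := hpre
    set A : Set G := interior V₀ with hAdef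
    have hA1 : (1:G) ∈ A := mem_interior_iff_mem_nhds.2 hV₀
    set V : Set G := A ∩ A⁻¹ with hVdef
    have hVo : IsOpen V := isOpen_interior.inter (isOpen_interior.inv)
    have hV1 : (1:G) ∈ V := ⟨hA1, by simpa using hA1⟩
    set O' : Set Y.X := interior P with hO'def
    have hpO' : p ∈ O' := mem_interior_iff_mem_nhds.2 hP
    have hmove : ∀ v ∈ A, ∀ y ∈ O', v • y ∈ O := by
      intro v hv y hy
      exact hVP (Set.mk_mem_prod (interior_subset hv) (interior_subset hy))
    set H : Set G := ⋃ c ∈ C, (· • c) ⁻¹' O' with hHdef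
    have hHo : IsOpen H := isOpen_biUnion fun c _ =>
      (continuous_id.smul continuous_const).isOpen_preimage _ isOpen_interior
    have hclH : ∀ P' : Set F.X, IsOpen P' → x₀ ∈ P' →
        (Stmt15.orbIm x₀ H ∩ P').Nonempty := by
      intro P' hP'o hP'x
      have hopen : IsOpen (φ ⁻¹' P' ∩ O') := (hP'o.preimage hφc).inter isOpen_interior
      have hpmem : p ∈ φ ⁻¹' P' ∩ O' := ⟨by simp [Set.mem_preimage, hφp, hP'x], hpO'⟩
      obtain ⟨y, hyo, hyD⟩ := mem_closure_iff.1 hpD _ hopen hpmem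
      obtain ⟨g, c, hc, rfl⟩ := hyD
      have hφgc : φ (g • c) = g • x₀ := by
        rw [hφeq, show φ c = x₀ from hCsub hc]
      refine ⟨g • x₀, ⟨g, ?_, rfl⟩, ?_⟩
      · exact Set.mem_biUnion hc hyo.2
      · rw [← hφgc]; exact hyo.1
    obtain ⟨U, hUo, hUx, hUm⟩ := Stmt15.pin x₀ hx₀ (hVo.mem_nhds hV1)
    set Bset : Set G := H ∩ (fun g : G => g • x₀) ⁻¹' U with hBdef
    have hBo : IsOpen Bset := hHo.inter
      ((Stmt15.continuous_pi x₀).isOpen_preimage _ hUo)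
    obtain ⟨q0, ⟨h0, hh0H, rfl⟩, hq0U⟩ := hclH U hUo hUx
    have hb : h0 ∈ Bset := ⟨hh0H, hq0U⟩
    have hnm : ¬ IsMeagre (Stmt15.orbIm x₀ Bset) := Stmt15.orbIm_nonmeager x₀ hx₀ hBo hb
    have hne : (Stmt15.orbIm x₀ Bset \ (U \ Stmt15.orbIm x₀ V)).Nonempty := by
      rcases Set.eq_empty_or_nonempty (Stmt15.orbIm x₀ Bset \ (U \ Stmt15.orbIm x₀ V))
        with he | he
      · exfalso
        apply hnm
        refine hUm.mono ?_
        intro z hz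
        by_contra hzc
        rw [Set.eq_empty_iff_forall_notMem] at he
        exact he z ⟨hz, hzc⟩
      · exact he
    obtain ⟨q, ⟨h, hhB, rfl⟩, hq2⟩ := hne
    have hqV : h • x₀ ∈ Stmt15.orbIm x₀ V := by
      by_contra hcon
      exact hq2 ⟨hhB.2, hcon⟩
    obtain ⟨v, hvV, hveq⟩ := hqV
    have hhH : h ∈ H := hhB.1
    rw [hHdef] at hhH
    obtain ⟨c, hcC, hhc⟩ := Set.mem_iUnion₂.1 hhH
    have hs : (v⁻¹ * h) • x₀ = x₀ := by
      rw [mul_smul, ← hveq, inv_smul_smul]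
    have hsC : (v⁻¹ * h) • c ∈ C := hCinv _ hs c hcC
    have hsO : (v⁻¹ * h) • c ∈ O := by
      rw [mul_smul]
      refine hmove v⁻¹ ?_ _ hhc
      have := hvV.2
      rwa [Set.mem_inv] at this
    exact ⟨_, hsO, hsC⟩
  · intro c hc
    exact ⟨subset_closure ⟨1, c, hc, (one_smul G c).symm⟩, hCsub hc⟩
end

section
/- Let G be a Polish group and Y a minimal G-flow. Then there exists a minimal G-flow X and a proximal extension φ: X → Y such that for every minimal G-flow Z and every proximal extension ψ: Z → Y, there exists a proximal extension π: X → Z with ψ ∘ π = φ. Moreover, X is unique up to isomorphism of G-flows. -/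
universe u v w x

variable {G : Type u} [Group G] [TopologicalSpace G] [IsTopologicalGroup G]

/-- An extension `φ : X → Y` of `G`-flows is proximal if every pair in a common fiber is
proximal: the closure of its `G`-orbit in `X × X` meets the diagonal. -/
def IsProximalExt {G : Type u} [Group G] [TopologicalSpace G] [IsTopologicalGroup G]
    (F₁ : GFlow.{u, v} G) (F₂ : GFlow.{u, w} G) (φ : F₁.X → F₂.X) : Prop :=
  IsExtension F₁ F₂ φ ∧
    ∀ x y : F₁.X, φ x = φ y →
      ∃ z : F₁.X, (z, z) ∈ closure {p : F₁.X × F₁.X | ∃ g : G, p = (g • x, g • y)}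

namespace S19

/-- An opaque wrapper (with no topology or action instances) used as the carrier universe
for representatives of minimal proximal extensions. -/
structure Blob (G : Type u) : Type (max u v) where
  toSet : Set (Set (ULift.{v} G))

lemma Blob.mk_injective : Function.Injective (Blob.mk (G := G) : _ → Blob.{u, v} G) :=
  fun _ _ h => congrArg Blob.toSet h

/-- The orbit closure of a point is a subflow. -/
lemma isSubflow_orbitClosure (F : GFlow.{u, v} G) (x : F.X) :
    IsSubflow F (closure (Set.range fun g : G => g • x)) := by
  refine ⟨⟨x, subset_closure ⟨1, one_smul G x⟩⟩, isClosed_closure, fun g y hy => ?_⟩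
  have h1 : (g • ·) '' (Set.range fun h : G => h • x) ⊆ Set.range fun h : G => h • x := by
    rintro _ ⟨_, ⟨h, rfl⟩, rfl⟩
    exact ⟨g * h, mul_smul g h x⟩
  have h2 : g • y ∈ (g • ·) '' closure (Set.range fun h : G => h • x) := ⟨y, hy, rfl⟩
  exact closure_mono h1 (image_closure_subset_closure_image (continuous_const_smul g) h2)

/-- Every subflow contains a minimal subflow. -/
lemma exists_minimal_subflow (F : GFlow.{u, v} G) (C : Set F.X) (hC : IsSubflow F C) :
    ∃ M, M ⊆ C ∧ IsSubflow F M ∧ ∀ D, IsSubflow F D → D ⊆ M → D = M := by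
  have H : ∀ c ⊆ {D | IsSubflow F D}, IsChain (· ⊆ ·) c → c.Nonempty →
      ∃ lb ∈ {D | IsSubflow F D}, ∀ s ∈ c, lb ⊆ s := by
    intro c hcS hchain hcne
    haveI : Nonempty c := hcne.to_subtype
    refine ⟨⋂₀ c, ⟨?_, isClosed_sInter fun D hD => (hcS hD).2.1, ?_⟩,
      fun D hD => Set.sInter_subset_of_mem hD⟩
    · exact IsCompact.nonempty_sInter_of_directed_nonempty_isCompact_isClosed
        (fun A hA B hB => (hchain.total hA hB).elim
          (fun h => ⟨A, hA, Set.Subset.refl A, h⟩) fun h => ⟨B, hB, h, Set.Subset.refl B⟩)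
        (fun D hD => (hcS hD).1)
        (fun D hD => (hcS hD).2.1.isCompact) (fun D hD => (hcS hD).2.1)
    · intro g y hy
      exact Set.mem_sInter.2 fun D hD => (hcS hD).2.2 g y (Set.mem_sInter.1 hy D hD)
  obtain ⟨M, hMC, hM⟩ := zorn_superset_nonempty {D | IsSubflow F D} H C hC
  exact ⟨M, hMC, hM.prop, fun D hD hDM => le_antisymm hDM (hM.2 hD hDM)⟩

lemma orbitClosure_eq_of_minimal (F : GFlow.{u, v} G) (M : Set F.X) (hM : IsSubflow F M)
    (hmin : ∀ D, IsSubflow F D → D ⊆ M → D = M) {c : F.X} (hc : c ∈ M) :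
    closure (Set.range fun g : G => g • c) = M := by
  refine hmin _ (isSubflow_orbitClosure F c) (closure_minimal ?_ hM.2.1)
  rintro _ ⟨g, rfl⟩
  exact hM.2.2 g c hc

def subMul (F : GFlow.{u, v} G) (M : Set F.X) (hM : IsSubflow F M) : MulAction G ↥M where
  smul := fun g x => ⟨g • x.1, hM.2.2 g x.1 x.2⟩
  one_smul := fun x => Subtype.ext (one_smul G x.1)
  mul_smul := fun g h x => Subtype.ext (mul_smul g h x.1)

/-- The subflow as a `GFlow`. -/
def Sub (F : GFlow.{u, v} G) (M : Set F.X) (hM : IsSubflow F M) : GFlow.{u, v} G :=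
  letI := subMul F M hM
  { X := ↥M
    instCompactSpace := isCompact_iff_compactSpace.mp hM.2.1.isCompact
    instNonempty := hM.1.to_subtype
    instMulAction := subMul F M hM
    instContinuousSMul :=
      ⟨(continuous_fst.smul (continuous_subtype_val.comp continuous_snd)).subtype_mk _⟩ }

def subIncl (F : GFlow.{u, v} G) (M : Set F.X) (hM : IsSubflow F M) :
    (Sub F M hM).X → F.X := Subtype.val

lemma subIncl_smul (F : GFlow.{u, v} G) (M : Set F.X) (hM : IsSubflow F M) (g : G)
    (x : (Sub F M hM).X) : subIncl F M hM (g • x) = g • subIncl F M hM x := rfl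

lemma isGMap_subIncl (F : GFlow.{u, v} G) (M : Set F.X) (hM : IsSubflow F M) :
    IsGMap (Sub F M hM) F (subIncl F M hM) :=
  ⟨continuous_subtype_val, fun _ _ => rfl⟩

lemma Sub_isMinimal (F : GFlow.{u, v} G) (M : Set F.X) (hM : IsSubflow F M)
    (hmin : ∀ D, IsSubflow F D → D ⊆ M → D = M) : (Sub F M hM).IsMinimal := by
  intro C hC
  letI := subMul F M hM
  have h1 : IsSubflow F (Subtype.val '' C) := by
    refine ⟨hC.1.image _, (hC.2.1.isCompact.image continuous_subtype_val).isClosed, ?_⟩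
    rintro g _ ⟨x, hx, rfl⟩
    exact ⟨(g • x : (Sub F M hM).X), hC.2.2 g x hx, rfl⟩
  have h2 : Subtype.val '' C = M := hmin _ h1 (by rintro _ ⟨x, _, rfl⟩; exact x.2)
  apply Set.eq_univ_of_forall
  intro x
  have hx : subIncl F M hM x ∈ Subtype.val '' C := by
    rw [h2]; exact x.2
  obtain ⟨y, hy, h⟩ := hx
  have : y = x := Subtype.ext h
  rwa [← this]

lemma surj_of_isGMap_minimal {F₁ : GFlow.{u, v} G} {F₂ : GFlow.{u, w} G} {f : F₁.X → F₂.X}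
    (hf : IsGMap F₁ F₂ f) (h₂ : F₂.IsMinimal) : Function.Surjective f := by
  have h : IsSubflow F₂ (Set.range f) := by
    refine ⟨Set.range_nonempty f, (isCompact_range hf.1).isClosed, ?_⟩
    rintro g _ ⟨x, rfl⟩
    exact ⟨g • x, hf.2 g x⟩
  rw [← Set.range_eq_univ]
  exact h₂ _ h

def prodFlow (F₁ : GFlow.{u, v} G) (F₂ : GFlow.{u, w} G) : GFlow.{u, max v w} G :=
  ⟨F₁.X × F₂.X⟩
lemma pairOrbit_eq (F : GFlow.{u, v} G) (x y : F.X) :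
    {p : F.X × F.X | ∃ g : G, p = (g • x, g • y)} =
      Set.range (fun g : G => g • ((x, y) : F.X × F.X)) := by
  ext p
  constructor
  · rintro ⟨g, rfl⟩; exact ⟨g, rfl⟩
  · rintro ⟨g, rfl⟩; exact ⟨g, rfl⟩

lemma isSubflow_pairOrbitClosure (F : GFlow.{u, v} G) (x y : F.X) :
    IsSubflow (prodFlow F F) (closure {p : F.X × F.X | ∃ g : G, p = (g • x, g • y)}) := by
  convert isSubflow_orbitClosure (prodFlow F F) (x, y) using 2
  exact pairOrbit_eq F x y

lemma gmap_fix (F : GFlow.{u, v} G) (hmin : F.IsMinimal) (ρ : F.X → F.X) (hρ : IsGMap F F ρ)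
    (hp : ∀ x : F.X, ∃ z : F.X,
      (z, z) ∈ closure {p : F.X × F.X | ∃ g : G, p = (g • x, g • ρ x)}) :
    ∀ x, ρ x = x := by
  have hGrsub : IsSubflow (prodFlow F F) {q : F.X × F.X | q.2 = ρ q.1} := by
    refine ⟨⟨(Classical.arbitrary F.X, ρ (Classical.arbitrary F.X)), rfl⟩,
      isClosed_eq continuous_snd (hρ.1.comp continuous_fst), ?_⟩
    intro g q hq
    show g • q.2 = ρ (g • q.1)
    rw [hρ.2, hq]
  obtain ⟨M', hM'Gr, hM'sub, hM'min⟩ :=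
    exists_minimal_subflow (prodFlow F F) _ hGrsub
  obtain ⟨c, hc⟩ := hM'sub.1
  have horb : closure (Set.range fun g : G => g • c) = M' :=
    orbitClosure_eq_of_minimal _ _ hM'sub hM'min hc
  have hc2 : c.2 = ρ c.1 := hM'Gr hc
  obtain ⟨z, hz⟩ := hp c.1
  have hzM : (z, z) ∈ M' := by
    rw [← horb]
    rw [← hc2] at hz
    rw [pairOrbit_eq] at hz
    exact hz
  have hΔ : {q ∈ M' | q.1 = q.2} = M' := by
    refine hM'min _ ⟨⟨(z, z), hzM, rfl⟩,
      hM'sub.2.1.inter (isClosed_eq continuous_fst continuous_snd), ?_⟩ (Set.sep_subset _ _)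
    intro g q hq
    refine ⟨hM'sub.2.2 g q hq.1, ?_⟩
    show g • q.1 = g • q.2
    rw [hq.2]
  have hceq : c.1 = c.2 := by
    have hm : c ∈ {q ∈ M' | q.1 = q.2} := hΔ.symm ▸ hc
    exact hm.2
  have hfix : ρ c.1 = c.1 := by rw [← hc2, ← hceq]
  have huniv : {x : F.X | ρ x = x} = Set.univ := by
    refine hmin _ ⟨⟨c.1, hfix⟩, isClosed_eq hρ.1 continuous_id, ?_⟩
    intro g x hx
    show ρ (g • x) = g • x
    rw [hρ.2, hx]
  exact fun x => Set.eq_univ_iff_forall.1 huniv x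
/-- The data of a flow together with a map to `Y`, satisfying all conditions of a minimal
proximal extension of `Y`. -/
structure GoodFlow (Y : GFlow.{u, v} G) (S : Type w) [TopologicalSpace S]
    (act : G → S → S) (ψ : S → Y.X) : Prop where
  hone : ∀ x, act 1 x = x
  hmul : ∀ g h x, act (g * h) x = act g (act h x)
  hcont : Continuous fun p : G × S => act p.1 p.2
  hcomp : CompactSpace S
  ht2 : T2Space S
  hne : Nonempty S
  hmin : ∀ C : Set S, C.Nonempty → IsClosed C → (∀ g, ∀ x ∈ C, act g x ∈ C) → C = Set.univ
  hpsic : Continuous ψ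
  hpsie : ∀ g x, ψ (act g x) = g • ψ x
  hpsis : Function.Surjective ψ
  hpsip : ∀ x y, ψ x = ψ y →
    ∃ z, (z, z) ∈ closure {p : S × S | ∃ g : G, p = (act g x, act g y)}

def mulOfGood {Y : GFlow.{u, v} G} {S : Type w} [ts : TopologicalSpace S]
    {act : G → S → S} {ψ : S → Y.X} (h : GoodFlow Y S act ψ) : MulAction G S where
  smul := act
  one_smul := h.hone
  mul_smul := h.hmul

/-- Builds a `GFlow` out of good flow data. -/
def flowOfGood {Y : GFlow.{u, v} G} {S : Type w} [ts : TopologicalSpace S]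
    {act : G → S → S} {ψ : S → Y.X} (h : GoodFlow Y S act ψ) : GFlow.{u, w} G :=
  letI := mulOfGood h
  { X := S
    instCompactSpace := h.hcomp
    instT2Space := h.ht2
    instNonempty := h.hne
    instMulAction := mulOfGood h
    instContinuousSMul := ⟨h.hcont⟩ }

lemma flowOfGood_isMinimal {Y : GFlow.{u, v} G} {S : Type w} [ts : TopologicalSpace S]
    {act : G → S → S} {ψ : S → Y.X} (h : GoodFlow Y S act ψ) :
    (flowOfGood h).IsMinimal := fun C hC => h.hmin C hC.1 hC.2.1 hC.2.2

/-- The index type for the representatives of minimal proximal extensions of `Y`. -/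
def Idx (Y : GFlow.{u, v} G) : Type (max u v) :=
  (S : Set (Blob.{u, v} G)) ×
    (TopologicalSpace ↥S × (G → ↥S → ↥S) × (↥S → Y.X))

def GoodIdx (Y : GFlow.{u, v} G) (i : Idx Y) : Prop :=
  @GoodFlow G _ _ _ Y ↥i.1 i.2.1 i.2.2.1 i.2.2.2
variable (Y : GFlow.{u, v} G)

def JIdx : Type (max u v) := {i : Idx Y // GoodIdx Y i}

instance instTopJ (j : JIdx Y) : TopologicalSpace ↥j.1.1 := j.1.2.1

instance instMulJ (j : JIdx Y) : MulAction G ↥j.1.1 := mulOfGood (Y := Y) j.2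

instance instCompJ (j : JIdx Y) : CompactSpace ↥j.1.1 := GoodFlow.hcomp j.2

instance instT2J (j : JIdx Y) : T2Space ↥j.1.1 := GoodFlow.ht2 j.2

instance instNeJ (j : JIdx Y) : Nonempty ↥j.1.1 := GoodFlow.hne j.2

instance instCSJ (j : JIdx Y) : ContinuousSMul G ↥j.1.1 := ⟨GoodFlow.hcont j.2⟩

def ZJ (j : JIdx Y) : GFlow.{u, max u v} G := ⟨↥j.1.1⟩

def psiJ (j : JIdx Y) : (ZJ Y j).X → Y.X := j.1.2.2.2

lemma psiJ_cont (j : JIdx Y) : Continuous (psiJ Y j) := GoodFlow.hpsic j.2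

lemma psiJ_equiv (j : JIdx Y) (g : G) (x : (ZJ Y j).X) :
    psiJ Y j (g • x) = g • psiJ Y j x := GoodFlow.hpsie j.2 g x

lemma psiJ_surj (j : JIdx Y) : Function.Surjective (psiJ Y j) := GoodFlow.hpsis j.2

lemma psiJ_prox (j : JIdx Y) : ∀ x y : (ZJ Y j).X, psiJ Y j x = psiJ Y j y →
    ∃ z, (z, z) ∈ closure {p : (ZJ Y j).X × (ZJ Y j).X | ∃ g : G, p = (g • x, g • y)} :=
  GoodFlow.hpsip j.2

lemma exists_rep (Y : GFlow.{u, v} G) (Z : GFlow.{u, max u v} G) (hZmin : Z.IsMinimal)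
    (ψ : Z.X → Y.X) (hψGM : IsGMap Z Y ψ) (hψs : Function.Surjective ψ)
    (hψp : ∀ x y : Z.X, ψ x = ψ y →
      ∃ z, (z, z) ∈ closure {p : Z.X × Z.X | ∃ g : G, p = (g • x, g • y)}) :
    ∃ (j : JIdx Y) (e : Z.X ≃ (ZJ Y j).X),
      Continuous (e : Z.X → (ZJ Y j).X) ∧ Continuous (e.symm : (ZJ Y j).X → Z.X) ∧
      (∀ (g : G) (z : Z.X), e (g • z) = g • e z) ∧
      (∀ z, psiJ Y j (e z) = ψ z) := by
  obtain ⟨z₀⟩ := Z.instNonempty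
  have hdense : Dense (Set.range fun g : G => g • z₀) := by
    rw [dense_iff_closure_eq]
    exact hZmin _ (isSubflow_orbitClosure Z z₀)
  set ι : Z.X → Blob.{u, v} G :=
    fun z => ⟨{A | z ∈ closure ((fun a : ULift.{v} G => a.down • z₀) '' A)}⟩ with hι
  have hinj : Function.Injective ι := by
    intro z z' hzz'
    replace hzz' : {A | z ∈ closure ((fun a : ULift.{v} G => a.down • z₀) '' A)}
        = {A | z' ∈ closure ((fun a : ULift.{v} G => a.down • z₀) '' A)} :=
      congrArg Blob.toSet hzz'
    by_contra hne
    have h1 : ({z'}ᶜ : Set Z.X) ∈ nhds z := isOpen_compl_singleton.mem_nhds (by simpa using hne)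
    obtain ⟨t, ht, htc, hts⟩ := exists_mem_nhds_isClosed_subset h1
    set U := interior t with hU
    set A : Set (ULift.{v} G) := {a | a.down • z₀ ∈ U} with hA
    have himg : (fun a : ULift.{v} G => a.down • z₀) '' A =
        U ∩ Set.range fun g : G => g • z₀ := by
      ext w
      constructor
      · rintro ⟨a, ha, rfl⟩; exact ⟨ha, ⟨a.down, rfl⟩⟩
      · rintro ⟨hw, ⟨g, rfl⟩⟩; exact ⟨⟨g⟩, hw, rfl⟩
    have hzA : A ∈ {A | z ∈ closure ((fun a : ULift.{v} G => a.down • z₀) '' A)} := by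
      show z ∈ closure _
      rw [himg]
      exact hdense.open_subset_closure_inter isOpen_interior (mem_interior_iff_mem_nhds.2 ht)
    have hz'A : A ∉ {A | z' ∈ closure ((fun a : ULift.{v} G => a.down • z₀) '' A)} := by
      show z' ∉ closure _
      rw [himg]
      intro hmem
      have h2 : z' ∈ t := by
        have := closure_mono (Set.inter_subset_left.trans interior_subset) hmem
        rwa [htc.closure_eq] at this
      exact hts h2 rfl
    rw [hzz'] at hzA
    exact hz'A hzA
  set S : Set (Blob.{u, v} G) := Set.range ι with hS
  set e : Z.X ≃ ↥S := Equiv.ofInjective ι hinj with he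
  letI τ : TopologicalSpace ↥S :=
    TopologicalSpace.coinduced (e : Z.X → ↥S) Z.instTopologicalSpace
  have hce : Continuous (e : Z.X → ↥S) := continuous_coinduced_rng
  have hces : Continuous (e.symm : ↥S → Z.X) := by
    rw [continuous_coinduced_dom]
    simpa [Function.comp_def] using continuous_id'
  set E : Z.X ≃ₜ ↥S := Homeomorph.mk e hce hces with hE
  set act' : G → ↥S → ↥S := fun g s => e (g • e.symm s) with hact
  set ψ' : ↥S → Y.X := fun s => ψ (e.symm s) with hψ'
  have hgood : GoodFlow Y ↥S act' ψ' := by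
    constructor
    · intro s; simp [hact]
    · intro g h s; simp [hact, mul_smul]
    · exact hce.comp ((continuous_fst.smul (hces.comp continuous_snd)))
    · exact E.compactSpace
    · exact E.symm.isEmbedding.t2Space
    · exact ⟨e z₀⟩
    · intro C hne' hcl hinv
      have hD : (e : Z.X → ↥S) ⁻¹' C = Set.univ := by
        refine hZmin _ ⟨?_, hcl.preimage hce, ?_⟩
        · obtain ⟨c, hc⟩ := hne'
          exact ⟨e.symm c, by simp [Set.mem_preimage]; exact hc⟩
        · intro g x hx
          have h3 := hinv g (e x) hx
          simpa [hact, Set.mem_preimage] using h3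
      apply Set.eq_univ_of_forall
      intro s
      have h4 := Set.eq_univ_iff_forall.1 hD (e.symm s)
      simpa [Set.mem_preimage] using h4
    · exact hψGM.1.comp hces
    · intro g s; simp [hψ', hact, hψGM.2]
    · exact hψs.comp e.symm.surjective
    · intro x y hxy
      obtain ⟨z, hz⟩ := hψp (e.symm x) (e.symm y) hxy
      refine ⟨e z, ?_⟩
      have himg2 : (E.prodCongr E) ''
          {p : Z.X × Z.X | ∃ g : G, p = (g • e.symm x, g • e.symm y)} =
          {p : ↥S × ↥S | ∃ g : G, p = (act' g x, act' g y)} := by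
        ext p
        constructor
        · rintro ⟨⟨a, b⟩, ⟨g, hab⟩, rfl⟩
          refine ⟨g, ?_⟩
          rw [Prod.mk.injEq] at hab
          simp [hact, Homeomorph.prodCongr, hab.1, hab.2]; exact ⟨rfl, rfl⟩
        · rintro ⟨g, rfl⟩
          exact ⟨(g • e.symm x, g • e.symm y), ⟨g, rfl⟩, by
            simp [hact, Homeomorph.prodCongr]; exact ⟨rfl, rfl⟩⟩
      have h5 : ((E.prodCongr E) (z, z)) ∈ (E.prodCongr E) ''
          closure {p : Z.X × Z.X | ∃ g : G, p = (g • e.symm x, g • e.symm y)} :=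
        ⟨(z, z), hz, rfl⟩
      rw [Homeomorph.image_closure, himg2] at h5
      simp [Homeomorph.prodCongr] at h5; exact h5
  refine ⟨⟨⟨S, τ, act', ψ'⟩, hgood⟩, e, hce, hces, ?_, ?_⟩
  · intro g z
    show e (g • z) = e (g • e.symm (e z))
    rw [e.symm_apply_apply]
  · intro z
    show ψ (e.symm (e z)) = ψ z
    rw [e.symm_apply_apply]
def bigP : GFlow.{u, max u v} G := ⟨Y.X × ∀ j : JIdx Y, (ZJ Y j).X⟩

def bigSet : Set (bigP Y).X :=
  {p : Y.X × ∀ j : JIdx Y, (ZJ Y j).X | ∀ j, psiJ Y j (p.2 j) = p.1}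

lemma bigSet_subflow : IsSubflow (bigP Y) (bigSet Y) := by
  refine ⟨?_, ?_, ?_⟩
  · refine ⟨(Classical.arbitrary Y.X,
      fun j => Function.surjInv (psiJ_surj Y j) (Classical.arbitrary Y.X)),
      fun j => Function.surjInv_eq _ _⟩
  · have h : bigSet Y = ⋂ j : JIdx Y,
        {p : Y.X × ∀ j : JIdx Y, (ZJ Y j).X | psiJ Y j (p.2 j) = p.1} := by
      ext p; exact ⟨fun hp => Set.mem_iInter.2 hp, fun hp j => Set.mem_iInter.1 hp j⟩
    rw [h]
    exact isClosed_iInter fun j => isClosed_eq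
      ((psiJ_cont Y j).comp ((continuous_apply j).comp continuous_snd)) continuous_fst
  · intro g p hp j
    show psiJ Y j (g • p.2 j) = g • p.1
    rw [psiJ_equiv, hp j]
def phiM (M : Set (bigP Y).X) (hM : IsSubflow (bigP Y) M) :
    (Sub (bigP Y) M hM).X → Y.X :=
  fun x => (subIncl (bigP Y) M hM x).1

def piM (j : JIdx Y) (M : Set (bigP Y).X) (hM : IsSubflow (bigP Y) M) :
    (Sub (bigP Y) M hM).X → (ZJ Y j).X :=
  fun x => (subIncl (bigP Y) M hM x).2 j

lemma phiM_gmap (M : Set (bigP Y).X) (hM : IsSubflow (bigP Y) M) :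
    IsGMap (Sub (bigP Y) M hM) Y (phiM Y M hM) :=
  ⟨continuous_fst.comp continuous_subtype_val, fun _ _ => rfl⟩

lemma piM_gmap (j : JIdx Y) (M : Set (bigP Y).X) (hM : IsSubflow (bigP Y) M) :
    IsGMap (Sub (bigP Y) M hM) (ZJ Y j) (piM Y j M hM) :=
  ⟨(continuous_apply j).comp (continuous_snd.comp continuous_subtype_val), fun _ _ => rfl⟩

lemma psiJ_piM (j : JIdx Y) (M : Set (bigP Y).X) (hM : IsSubflow (bigP Y) M)
    (hMB : M ⊆ bigSet Y) (x : (Sub (bigP Y) M hM).X) :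
    psiJ Y j (piM Y j M hM x) = phiM Y M hM x :=
  hMB x.2 j

lemma phiM_prox (M : Set (bigP Y).X) (hM : IsSubflow (bigP Y) M) (hMB : M ⊆ bigSet Y)
    (hMmin : ∀ D, IsSubflow (bigP Y) D → D ⊆ M → D = M) :
    ∀ x y : (Sub (bigP Y) M hM).X, phiM Y M hM x = phiM Y M hM y →
      ∃ z, (z, z) ∈ closure {p : (Sub (bigP Y) M hM).X × (Sub (bigP Y) M hM).X |
        ∃ g : G, p = (g • x, g • y)} := by
  intro x y hxy
  have hNsub : IsSubflow (prodFlow (Sub (bigP Y) M hM) (Sub (bigP Y) M hM))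
      (closure {p : (Sub (bigP Y) M hM).X × (Sub (bigP Y) M hM).X |
        ∃ g : G, p = (g • x, g • y)}) :=
    isSubflow_pairOrbitClosure (Sub (bigP Y) M hM) x y
  have hNR : closure {p : (Sub (bigP Y) M hM).X × (Sub (bigP Y) M hM).X |
      ∃ g : G, p = (g • x, g • y)} ⊆
      {q : (Sub (bigP Y) M hM).X × (Sub (bigP Y) M hM).X |
        phiM Y M hM q.1 = phiM Y M hM q.2} := by
    apply closure_minimal ?_ (isClosed_eq ((phiM_gmap Y M hM).1.comp continuous_fst)
      ((phiM_gmap Y M hM).1.comp continuous_snd))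
    rintro _ ⟨g, rfl⟩
    show phiM Y M hM (g • x) = phiM Y M hM (g • y)
    rw [(phiM_gmap Y M hM).2, (phiM_gmap Y M hM).2, hxy]
  obtain ⟨M', hM'N, hM'sub, hM'min⟩ :=
    exists_minimal_subflow (prodFlow (Sub (bigP Y) M hM) (Sub (bigP Y) M hM)) _ hNsub
  obtain ⟨c, hc⟩ := hM'sub.1
  have hcR : phiM Y M hM c.1 = phiM Y M hM c.2 := hNR (hM'N hc)
  -- each coordinate is equal on all of `M'`
  have hcoord : ∀ j : JIdx Y, piM Y j M hM c.1 = piM Y j M hM c.2 := by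
    intro j
    have hfib : psiJ Y j (piM Y j M hM c.1) = psiJ Y j (piM Y j M hM c.2) := by
      rw [psiJ_piM Y j M hM hMB, psiJ_piM Y j M hM hMB, hcR]
    obtain ⟨zj, hzj⟩ := psiJ_prox Y j _ _ hfib
    -- the orbit closure of the `j`-th pair is inside the image of `M'`
    have hFjcont : Continuous (fun q : (Sub (bigP Y) M hM).X × (Sub (bigP Y) M hM).X =>
        ((piM Y j M hM q.1, piM Y j M hM q.2) : (ZJ Y j).X × (ZJ Y j).X)) :=
      ((piM_gmap Y j M hM).1.comp continuous_fst).prodMk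
        ((piM_gmap Y j M hM).1.comp continuous_snd)
    have hsubimg : closure {p : (ZJ Y j).X × (ZJ Y j).X |
        ∃ g : G, p = (g • piM Y j M hM c.1, g • piM Y j M hM c.2)} ⊆
        (fun q : (Sub (bigP Y) M hM).X × (Sub (bigP Y) M hM).X =>
          ((piM Y j M hM q.1, piM Y j M hM q.2) : (ZJ Y j).X × (ZJ Y j).X)) '' M' := by
      apply closure_minimal ?_ (hM'sub.2.1.isCompact.image hFjcont).isClosed
      rintro _ ⟨g, rfl⟩
      exact ⟨g • c, hM'sub.2.2 g c hc, rfl⟩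
    obtain ⟨c', hc', hFc'⟩ := hsubimg hzj
    have hdiag : {q ∈ M' | piM Y j M hM q.1 = piM Y j M hM q.2} = M' := by
      refine hM'min _ ⟨⟨c', hc', ?_⟩, hM'sub.2.1.inter (isClosed_eq
        ((piM_gmap Y j M hM).1.comp continuous_fst)
        ((piM_gmap Y j M hM).1.comp continuous_snd)), ?_⟩ (Set.sep_subset _ _)
      · have h1 : piM Y j M hM c'.1 = zj := congrArg Prod.fst hFc'
        have h2 : piM Y j M hM c'.2 = zj := congrArg Prod.snd hFc'
        rw [h1, h2]
      · intro g q hq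
        refine ⟨hM'sub.2.2 g q hq.1, ?_⟩
        show g • piM Y j M hM q.1 = g • piM Y j M hM q.2
        rw [hq.2]
    have : c ∈ {q ∈ M' | piM Y j M hM q.1 = piM Y j M hM q.2} := hdiag.symm ▸ hc
    exact this.2
  -- conclude `c.1 = c.2`
  have hval : subIncl (bigP Y) M hM c.1 = subIncl (bigP Y) M hM c.2 := by
    refine Prod.ext hcR (funext fun j => hcoord j)
  have hceq : c.1 = c.2 := Subtype.ext hval
  refine ⟨c.1, ?_⟩
  have : ((c.1, c.1) : (Sub (bigP Y) M hM).X × (Sub (bigP Y) M hM).X) = c := by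
    rw [show ((c.1, c.1) : (Sub (bigP Y) M hM).X × (Sub (bigP Y) M hM).X) = (c.1, c.2)
      from by rw [hceq]]
    exact Prod.mk.eta
  rw [this]
  exact hM'N hc

end S19

/-- **Statement 19.** Every minimal flow of a Polish group admits a maximal proximal
extension, unique up to isomorphism. -/
theorem statement19 {G : Type u} [Group G] [TopologicalSpace G] [IsTopologicalGroup G]
    [PolishSpace G] (Y : GFlow.{u, v} G) (hY : Y.IsMinimal) :
    ∃ (X : GFlow.{u, max u v} G) (φ : X.X → Y.X),
      X.IsMinimal ∧ IsProximalExt X Y φ ∧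
      (∀ (Z : GFlow.{u, max u v} G) (ψ : Z.X → Y.X), Z.IsMinimal →
        IsProximalExt Z Y ψ →
        ∃ π : X.X → Z.X, IsProximalExt X Z π ∧ ψ ∘ π = φ) ∧
      ∀ (X' : GFlow.{u, max u v} G) (φ' : X'.X → Y.X), X'.IsMinimal →
        IsProximalExt X' Y φ' →
        (∀ (Z : GFlow.{u, max u v} G) (ψ : Z.X → Y.X), Z.IsMinimal →
          IsProximalExt Z Y ψ →
          ∃ π : X'.X → Z.X, IsProximalExt X' Z π ∧ ψ ∘ π = φ') →
        ∃ e : X.X → X'.X, IsGMap X X' e ∧ Function.Bijective e := by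

  classical
  obtain ⟨M, hMB, hMsub, hMmin⟩ :=
    S19.exists_minimal_subflow (S19.bigP Y) (S19.bigSet Y) (S19.bigSet_subflow Y)
  have hXmin : (S19.Sub (S19.bigP Y) M hMsub).IsMinimal := S19.Sub_isMinimal _ _ _ hMmin
  have hφprox : IsProximalExt (S19.Sub (S19.bigP Y) M hMsub) Y (S19.phiM Y M hMsub) :=
    ⟨⟨S19.phiM_gmap Y M hMsub, S19.surj_of_isGMap_minimal (S19.phiM_gmap Y M hMsub) hY⟩,
      S19.phiM_prox Y M hMsub hMB hMmin⟩
  have huniv : ∀ (Z : GFlow.{u, max u v} G) (ψ : Z.X → Y.X), Z.IsMinimal →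
      IsProximalExt Z Y ψ → ∃ π : (S19.Sub (S19.bigP Y) M hMsub).X → Z.X,
        IsProximalExt (S19.Sub (S19.bigP Y) M hMsub) Z π ∧ ψ ∘ π = S19.phiM Y M hMsub := by
    intro Z ψ hZmin hψ
    obtain ⟨j, e, hce, hces, hee, heψ⟩ := S19.exists_rep Y Z hZmin ψ hψ.1.1 hψ.1.2 hψ.2
    have hsy : ∀ (g : G) (s : (S19.ZJ Y j).X), e.symm (g • s) = g • e.symm s := by
      intro g s
      apply e.injective
      rw [Equiv.apply_symm_apply, hee, Equiv.apply_symm_apply]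
    have hπg : IsGMap (S19.Sub (S19.bigP Y) M hMsub) Z
        (fun x => e.symm (S19.piM Y j M hMsub x)) := by
      constructor
      · exact hces.comp (S19.piM_gmap Y j M hMsub).1
      · intro g x
        show e.symm (S19.piM Y j M hMsub (g • x)) = g • e.symm (S19.piM Y j M hMsub x)
        rw [(S19.piM_gmap Y j M hMsub).2, hsy]
    have hfib : ∀ a b, e.symm (S19.piM Y j M hMsub a) = e.symm (S19.piM Y j M hMsub b) →
        S19.phiM Y M hMsub a = S19.phiM Y M hMsub b := by
      intro a b hab
      have h1 : S19.piM Y j M hMsub a = S19.piM Y j M hMsub b := e.symm.injective hab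
      rw [← S19.psiJ_piM Y j M hMsub hMB a, ← S19.psiJ_piM Y j M hMsub hMB b, h1]
    refine ⟨fun x => e.symm (S19.piM Y j M hMsub x),
      ⟨⟨hπg, S19.surj_of_isGMap_minimal hπg hZmin⟩, ?_⟩, ?_⟩
    · intro a b hab
      exact S19.phiM_prox Y M hMsub hMB hMmin a b (hfib a b hab)
    · funext x
      show ψ (e.symm (S19.piM Y j M hMsub x)) = S19.phiM Y M hMsub x
      rw [← heψ (e.symm (S19.piM Y j M hMsub x)), Equiv.apply_symm_apply]
      exact S19.psiJ_piM Y j M hMsub hMB x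
  refine ⟨S19.Sub (S19.bigP Y) M hMsub, S19.phiM Y M hMsub, hXmin, hφprox, huniv, ?_⟩
  intro X' φ' hX'min hφ' huniv'
  obtain ⟨π, hπ, hπφ⟩ := huniv X' φ' hX'min hφ'
  obtain ⟨π', hπ', hπ'φ⟩ := huniv' (S19.Sub (S19.bigP Y) M hMsub) (S19.phiM Y M hMsub)
    hXmin hφprox
  have hσ : ∀ x, π' (π x) = x := by
    apply S19.gmap_fix (S19.Sub (S19.bigP Y) M hMsub) hXmin (fun x => π' (π x))
      ⟨hπ'.1.1.1.comp hπ.1.1.1, fun g x => by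
        show π' (π (g • x)) = g • π' (π x)
        rw [hπ.1.1.2, hπ'.1.1.2]⟩
    intro x
    apply hφprox.2
    have h1 : S19.phiM Y M hMsub (π' (π x)) = φ' (π x) := congrFun hπ'φ (π x)
    have h2 : φ' (π x) = S19.phiM Y M hMsub x := congrFun hπφ x
    rw [h1, h2]
  refine ⟨π, hπ.1.1, ?_, hπ.1.2⟩
  intro a b hab
  rw [← hσ a, ← hσ b, hab]
end
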